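/- arXiv:0904.1149 — 5 statements merged into one kernel-verified Lean document; each statement's English description precedes it below -/
import Mathlib

section
/- Kraft–Chaitin theorem: for every total recursive function f : ℕ⁺ → ℕ with Σ_{n=1}^∞ 2^{-f(n)} ≤ 1, there exists a total recursive injection g : ℕ⁺ → {0,1}* such that the range of g is prefix-free and |g(n)| = f(n) for all n. -/
open scoped Classical ENNReal

/-- A computer: a partial recursive function on binary strings with prefix-free domain. -/
structure Computer where
  f : List Bool →. List Bool
  partrec : Partrec f
  prefixFree : ∀ p q : List Bool, (f p).Dom → (f q).Dom → p <+: q → p = q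

/-- Program-size complexity `H_C(s)` (possibly `∞`). -/
noncomputable def Computer.H (C : Computer) (s : List Bool) : ℕ∞ :=
  sInf {n : ℕ∞ | ∃ p : List Bool, C.f p = Part.some s ∧ (p.length : ℕ∞) = n}

/-- Optimality: simulation of every computer with constant overhead in program length. -/
def Computer.IsOptimal (U : Computer) : Prop :=
  ∀ C : Computer, ∃ d : ℕ, ∀ p : List Bool, ∀ h : (C.f p).Dom,
    ∃ q : List Bool, U.f q = Part.some ((C.f p).get h) ∧ q.length ≤ p.length + d

/-- The halting probability of a computer. -/
noncomputable def Omega (V : Computer) : ℝ :=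
  ∑' p : {p : List Bool // (V.f p).Dom}, ((2 : ℝ) ^ p.val.length)⁻¹

/-- The first `n` bits of the base-two expansion of `α - ⌊α⌋` (with infinitely many zeros). -/
noncomputable def bits (α : ℝ) (n : ℕ) : List Bool :=
  (List.range n).map (fun i => decide (⌊Int.fract α * 2 ^ (i + 1)⌋ % 2 = 1))

/-- Weak Chaitin randomness relative to an optimal computer `U`:
`∃ c, ∀ n ≥ 1, n - c ≤ H(α ↾ n)`. -/
def WeaklyChaitinRandom (U : Computer) (α : ℝ) : Prop :=
  ∃ c : ℕ, ∀ n : ℕ, 1 ≤ n → (n : ℕ∞) ≤ U.H (bits α n) + c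

/-- The standard bijection `ℕ ≃ {0,1}*` (`s ↦ 1s - 1`). -/
def natToStr (n : ℕ) : List Bool := ((n + 1).bits).dropLast.reverse

/-- Complexity of a natural number. -/
noncomputable def HN (U : Computer) (a : ℕ) : ℕ∞ := U.H (natToStr a)

/-- Complexity of a pair of natural numbers (via a fixed recursive bijective pairing). -/
noncomputable def HPairN (U : Computer) (a b : ℕ) : ℕ∞ := U.H (natToStr (Nat.pair a b))

/-- All binary strings of length exactly `n`, in a canonical order. -/
def allOfLength : ℕ → List (List Bool)
  | 0 => [[]]
  | n + 1 => (allOfLength n).flatMap (fun l => [false :: l, true :: l])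

/-- All binary strings of length at most `n`, in a canonical order. -/
def allUpTo (n : ℕ) : List (List Bool) :=
  (List.range (n + 1)).flatMap allOfLength

/-- The canonical encoding (as a list) of `S ↾ n = {s ∈ S : |s| ≤ n}`. -/
noncomputable def restrictList (S : Set (List Bool)) (n : ℕ) : List (List Bool) :=
  (allUpTo n).filter (fun p => decide (p ∈ S))

/-- The domain (halting set) of a computer. -/
def domSet (V : Computer) : Set (List Bool) := {p | (V.f p).Dom}

/-- `Σ_{n=1}^∞ 2^{-f(n)}` (computed in `ℝ≥0∞`); here `f (n+1)` plays the role of `f(n)`,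
`f` being a function on positive integers. -/
noncomputable def kraftSum (f : ℕ → ℕ) : ℝ≥0∞ :=
  ∑' n : ℕ, ((2 : ℝ≥0∞) ^ f (n + 1))⁻¹

/-- A left-computable (r.e.) real. -/
def REReal (α : ℝ) : Prop :=
  ∃ g : ℕ → ℚ, Computable g ∧ (∀ n, (g n : ℝ) ≤ α) ∧
    Filter.Tendsto (fun n => (g n : ℝ)) Filter.atTop (nhds α)

/-- The term `2^{n - H(α ↾ n)}` (zero when `H(α ↾ n) = ∞`). -/
noncomputable def excessTerm (U : Computer) (α : ℝ) (n : ℕ) : ℝ :=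
  WithTop.recTopCoe 0 (fun h : ℕ => (2 : ℝ) ^ ((n : ℤ) - h)) (U.H (bits α n))

/-- The running time of the machine (code) `c` on input `p` (number of steps to halt). -/
noncomputable def runtime (c : Nat.Partrec.Code) (p : List Bool) : ℕ :=
  sInf {k : ℕ | (Nat.Partrec.Code.evaln k c (Encodable.encode p)).isSome = true}

/-- The deterministic machine (code) `c` computes the computer `V`. -/
def ComputesVia (c : Nat.Partrec.Code) (V : Computer) : Prop :=
  ∀ p : List Bool, c.eval (Encodable.encode p) = (V.f p).map Encodable.encode

/-- `T^M_n`: the maximum running time on halting inputs of length at most `n`. -/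
noncomputable def maxTime (c : Nat.Partrec.Code) (V : Computer) (n : ℕ) : ℕ :=
  sSup {t : ℕ | ∃ p : List Bool, (V.f p).Dom ∧ p.length ≤ n ∧ runtime c p = t}

/-- `L_M`: the minimum length of a halting input. -/
noncomputable def minLen (V : Computer) : ℕ :=
  sInf {k : ℕ | ∃ p : List Bool, (V.f p).Dom ∧ p.length = k}

set_option maxHeartbeats 1000000

namespace KC

noncomputable def w (k : ℕ) : ℝ := ((2:ℝ) ^ k)⁻¹

lemma w_pos (k : ℕ) : 0 < w k := by unfold w; positivity

lemma w_succ (m : ℕ) : w (m+1) + w (m+1) = w m := by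
  unfold w; rw [pow_succ]; field_simp; ring

def Incomp (a b : List Bool) : Prop := ¬ a <+: b ∧ ¬ b <+: a

lemma Incomp.symm {a b : List Bool} (h : Incomp a b) : Incomp b a := ⟨h.2, h.1⟩

lemma incomp_of_ne_getElem {a b : List Bool} (i : ℕ) (ha : i < a.length) (hb : i < b.length)
    (h : a[i] ≠ b[i]) : Incomp a b :=
  ⟨fun hp => h (hp.getElem ha), fun hp => h (hp.getElem hb).symm⟩

lemma incomp_ext {s x e : List Bool} (h : Incomp s x) (he : x <+: e) : Incomp s e :=
  ⟨fun hp => (List.prefix_or_prefix_of_prefix hp he).elim h.1 h.2,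
   fun hp => h.2 (he.trans hp)⟩

noncomputable def mea (S : List (List Bool)) : ℝ := (S.map fun s => w s.length).sum

lemma mea_append (A B : List (List Bool)) : mea (A ++ B) = mea A + mea B := by
  simp [mea]

lemma mea_perm {A B : List (List Bool)} (h : A.Perm B) : mea A = mea B :=
  (h.map _).sum_eq

lemma geomF (a k : ℕ) : ∑ j ∈ Finset.range k, w (a+1+j) = w a - w (a+k) := by
  induction k with
  | zero => simp
  | succ k ih =>
    rw [Finset.sum_range_succ, ih, show a+1+k = a+k+1 from by omega,
      show a+(k+1) = a+k+1 from by omega]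
    linarith [w_succ (a+k)]

lemma geomL (a k : ℕ) : ((List.range k).map fun j => w (a+j+1)).sum = w a - w (a+k) := by
  induction k with
  | zero => simp
  | succ k ih =>
    rw [List.range_succ, List.map_append, List.sum_append, ih]
    simp only [List.map_cons, List.map_nil, List.sum_cons, List.sum_nil]
    have := w_succ (a+k)
    have h1 : a+(k+1) = a+k+1 := by omega
    rw [h1]
    linarith

lemma sum_w_lt {T : Finset ℕ} {l : ℕ} (hT : ∀ k ∈ T, l < k) : (∑ k ∈ T, w k) < w l := by
  set m := T.sup id with hm
  have hsub : T ⊆ Finset.Ico (l+1) (l+1+m) := by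
    intro k hk
    have h1 := hT k hk
    have h2 : k ≤ m := Finset.le_sup (f := id) hk
    simp only [Finset.mem_Ico]
    omega
  calc (∑ k ∈ T, w k) ≤ ∑ k ∈ Finset.Ico (l+1) (l+1+m), w k :=
        Finset.sum_le_sum_of_subset_of_nonneg hsub (fun i _ _ => (w_pos i).le)
    _ = ∑ j ∈ Finset.range m, w (l+1+j) := by
        rw [Finset.sum_Ico_eq_sum_range]; simp
    _ = w l - w (l+m) := geomF l m
    _ < w l := by linarith [w_pos (l+m)]

def better (b a : List Bool) : List Bool := if b.length < a.length then a else b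

def pick (l : ℕ) (S : List (List Bool)) : List Bool :=
  (S.filter fun s => s.length ≤ l).foldl better []

def pad (l : ℕ) (x : List Bool) : List Bool := x ++ List.replicate (l - x.length) false

def piece (x : List Bool) (j : ℕ) : List Bool := x ++ (List.replicate j false ++ [true])

def pieces (l : ℕ) (x : List Bool) : List (List Bool) := (List.range (l - x.length)).map (piece x)

def stepFree (l : ℕ) (S : List (List Bool)) : List (List Bool) :=
  (S.filter (· ≠ pick l S)) ++ pieces l (pick l S)

def run (f : ℕ → ℕ) : ℕ → List (List Bool)
  | 0 => [[]]
  | n+1 => stepFree (f (n+1)) (run f n)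

def gfun (f : ℕ → ℕ) (n : ℕ) : List Bool := pad (f (n+1)) (pick (f (n+1)) (run f n))

lemma foldl_better_mem (L : List (List Bool)) : ∀ z, L.foldl better z = z ∨ L.foldl better z ∈ L := by
  induction L with
  | nil => intro z; exact Or.inl rfl
  | cons a t ih =>
    intro z
    simp only [List.foldl_cons]
    rcases ih (better z a) with h | h
    · rw [h]; unfold better; split
      · right; exact List.mem_cons_self
      · left; rfl
    · right; exact List.mem_cons_of_mem _ h

lemma foldl_better_le (L : List (List Bool)) :
    ∀ z, z.length ≤ (L.foldl better z).length ∧ ∀ a ∈ L, a.length ≤ (L.foldl better z).length := by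
  induction L with
  | nil => intro z; exact ⟨le_rfl, by simp⟩
  | cons a t ih =>
    intro z
    simp only [List.foldl_cons]
    obtain ⟨h1, h2⟩ := ih (better z a)
    have hz : z.length ≤ (better z a).length := by
      unfold better; split
      next h => exact h.le
      next h => exact le_rfl
    have hA : a.length ≤ (better z a).length := by
      unfold better; split
      next h => exact le_rfl
      next h => exact not_lt.mp h
    refine ⟨le_trans hz h1, ?_⟩
    intro b hb
    rcases List.mem_cons.mp hb with rfl | hb
    · exact le_trans hA h1
    · exact h2 b hb

lemma pick_length_le (l : ℕ) (S : List (List Bool)) : (pick l S).length ≤ l := by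
  unfold pick
  rcases foldl_better_mem (S.filter fun s => s.length ≤ l) [] with h | h
  · rw [h]; simp
  · have := List.of_mem_filter h
    simpa using this

lemma pick_spec {l : ℕ} {S : List (List Bool)} (h : (S.filter fun s => s.length ≤ l) ≠ []) :
    pick l S ∈ S ∧ ∀ s ∈ S, s.length ≤ l → s.length ≤ (pick l S).length := by
  have hmax : ∀ s ∈ S, s.length ≤ l → s.length ≤ (pick l S).length := by
    intro s hs hsl
    have hmem : s ∈ S.filter fun s => s.length ≤ l := List.mem_filter.mpr ⟨hs, by simpa⟩
    exact (foldl_better_le _ []).2 s hmem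
  refine ⟨?_, hmax⟩
  unfold pick
  rcases foldl_better_mem (S.filter fun s => s.length ≤ l) [] with h0 | h0
  · obtain ⟨a, ha⟩ := List.exists_mem_of_ne_nil _ h
    have haS : a ∈ S := (List.mem_filter.mp ha).1
    have hal : a.length ≤ l := by simpa using (List.mem_filter.mp ha).2
    have ha0 : a.length = 0 := by
      have := hmax a haS hal
      unfold pick at this
      rw [h0] at this
      simpa using this
    have haa : a = [] := List.eq_nil_of_length_eq_zero ha0
    rw [h0, ← haa]; exact haS
  · exact (List.mem_filter.mp h0).1

lemma incomp_append (x : List Bool) {u v : List Bool} (h : Incomp u v) :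
    Incomp (x ++ u) (x ++ v) :=
  ⟨fun hp => h.1 ((List.prefix_append_right_inj x).mp hp),
   fun hp => h.2 ((List.prefix_append_right_inj x).mp hp)⟩

lemma false_true_incomp (j k : ℕ) (h : j < k) (t : List Bool) :
    Incomp (List.replicate j false ++ [true]) (List.replicate k false ++ t) := by
  have e1 : (List.replicate j false ++ [true])[j]'(by simp) = true := by
    rw [List.getElem_append_right (by simp)]
    simp
  have e2 : (List.replicate k false ++ t)[j]'(by simp; omega) = false := by
    rw [List.getElem_append_left (by simpa using h)]
    simp
  exact incomp_of_ne_getElem j (by simp) (by simp; omega) (by rw [e1, e2]; simp)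


lemma pad_length (l : ℕ) (x : List Bool) (h : x.length ≤ l) : (pad l x).length = l := by
  simp [pad]; omega

lemma piece_length (x : List Bool) (j : ℕ) : (piece x j).length = x.length + (j + 1) := by
  simp [piece]

lemma filter_ne_nil {S : List (List Bool)} {l : ℕ} (hnd : (S.map List.length).Nodup)
    (hm : w l ≤ mea S) : (S.filter fun s => s.length ≤ l) ≠ [] := by
  intro h
  have hall : ∀ s ∈ S, l < s.length := by
    intro s hs
    by_contra hc
    have hmem : s ∈ S.filter fun s => s.length ≤ l :=
      List.mem_filter.mpr ⟨hs, by simpa using not_lt.mp hc⟩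
    rw [h] at hmem
    simp at hmem
  have hmea : mea S = ∑ k ∈ (S.map List.length).toFinset, w k := by
    rw [List.sum_toFinset _ hnd, List.map_map]
    rfl
  have hlt : (∑ k ∈ (S.map List.length).toFinset, w k) < w l := by
    apply sum_w_lt
    intro k hk
    rw [List.mem_toFinset, List.mem_map] at hk
    obtain ⟨s, hs, rfl⟩ := hk
    exact hall s hs
  rw [hmea] at hm
  linarith

lemma perm_cons_filter_ne {x : List Bool} : ∀ {S : List (List Bool)}, x ∈ S → S.Nodup →
    S.Perm (x :: S.filter (· ≠ x)) := by
  intro S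
  induction S with
  | nil => intro hx; cases hx
  | cons a t ih =>
    intro hx hnd
    obtain ⟨ha, hndt⟩ := List.nodup_cons.mp hnd
    rcases List.mem_cons.mp hx with rfl | hx'
    · have hft : t.filter (· ≠ x) = t := by
        apply List.filter_eq_self.mpr
        intro b hb
        simp only [decide_eq_true_eq]
        rintro rfl
        exact ha hb
      rw [List.filter_cons_of_neg (by simp), hft]
    · have hat : (a ≠ x) := by rintro rfl; exact ha hx'
      rw [List.filter_cons_of_pos (by simpa)]
      exact ((ih hx' hndt).cons a).trans (List.Perm.swap _ _ _)

lemma step_all {S : List (List Bool)} {l : ℕ}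
    (hpw : S.Pairwise Incomp) (hnd : (S.map List.length).Nodup)
    (hm : w l ≤ mea S) :
    pick l S ∈ S ∧
    (stepFree l S).Pairwise Incomp ∧
    ((stepFree l S).map List.length).Nodup ∧
    mea (stepFree l S) = mea S - w l ∧
    (∀ s ∈ stepFree l S, ∃ t ∈ S, t <+: s) ∧
    (∀ s ∈ stepFree l S, Incomp (pad l (pick l S)) s) := by
  have hsym : Symmetric Incomp := fun a b h => h.symm
  set x := pick l S with hxdef
  have hfil := filter_ne_nil hnd hm
  obtain ⟨hxS, hmax⟩ := pick_spec hfil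
  have hxl : x.length ≤ l := pick_length_le l S
  have hSnd : S.Nodup := hnd.of_map _
  -- membership in the filtered list
  have hmemf : ∀ s, s ∈ S.filter (· ≠ x) ↔ s ∈ S ∧ s ≠ x := by
    intro s
    rw [List.mem_filter]
    simp
  -- the permutation fact
  have hperm : S.Perm (x :: S.filter (· ≠ x)) := perm_cons_filter_ne hxS hSnd
  -- basic incomparability facts
  have hxs_incomp : ∀ s ∈ S, s ≠ x → Incomp s x := fun s hs hne =>
    (haveI : Std.Symm Incomp := ⟨fun a b h => h.symm⟩; hpw.forall hs hxS hne)
  have hpieces_mem : ∀ p ∈ pieces l x, ∃ j, j < l - x.length ∧ p = piece x j := by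
    intro p hp
    rw [pieces, List.mem_map] at hp
    obtain ⟨j, hj, rfl⟩ := hp
    exact ⟨j, by simpa using hj, rfl⟩
  have hpad_piece : ∀ j, j < l - x.length → Incomp (pad l x) (piece x j) := by
    intro j hj
    have h := false_true_incomp j (l - x.length) hj []
    rw [List.append_nil] at h
    exact incomp_append x h.symm
  have hpiece_piece : ∀ j j', j < j' → Incomp (piece x j) (piece x j') := by
    intro j j' hj
    exact incomp_append x (false_true_incomp j j' hj (List.replicate 0 false ++ [true]) |>.imp
      (fun h => h) (fun h => h)) |>.imp (fun h => h) (fun h => h)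
  refine ⟨hxS, ?_, ?_, ?_, ?_, ?_⟩
  · -- pairwise
    rw [stepFree, List.pairwise_append]
    refine ⟨List.Pairwise.sublist (List.filter_sublist (l := S)) hpw, ?_, ?_⟩
    · rw [pieces, List.pairwise_map]
      exact List.pairwise_lt_range.imp (fun h => hpiece_piece _ _ h)
    · intro a ha b hb
      obtain ⟨haS, hax⟩ := (hmemf a).mp ha
      obtain ⟨j, hj, rfl⟩ := hpieces_mem b hb
      exact incomp_ext (hxs_incomp a haS hax) (List.prefix_append _ _)
  · -- nodup lengths
    rw [stepFree, List.map_append, List.nodup_append]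
    refine ⟨((List.filter_sublist (l := S)).map _).nodup hnd, ?_, ?_⟩
    · rw [pieces, List.map_map]
      have : (List.length ∘ piece x) = fun j => x.length + (j + 1) := by
        funext j
        exact piece_length x j
      rw [this]
      exact List.nodup_range.map (fun a b h => by omega)
    · intro a ha b hb hab; subst hab
      rw [List.mem_map] at ha
      obtain ⟨s, hs, rfl⟩ := ha
      obtain ⟨hsS, hsx⟩ := (hmemf s).mp hs
      rw [pieces, List.map_map, List.mem_map] at hb
      obtain ⟨j, hj, hjl⟩ := hb
      simp only [Function.comp, piece_length] at hjl
      rw [List.mem_range] at hj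
      by_cases hsl : s.length ≤ l
      · have := hmax s hsS hsl
        omega
      · omega
  · -- measure
    have h1 : mea S = w x.length + mea (S.filter (· ≠ x)) := by
      rw [mea_perm hperm]
      simp [mea]
    have h2 : mea (pieces l x) = w x.length - w l := by
      have e : mea (pieces l x) = ((List.range (l - x.length)).map fun j => w (x.length + j + 1)).sum := by
        rw [mea, pieces, List.map_map]
        congr 1
        apply List.map_congr_left
        intro j _
        simp only [Function.comp, piece_length]
        congr 1
      rw [e, geomL]
      congr 2
      omega
    rw [stepFree, mea_append, h2]
    linarith
  · -- extension
    intro s hs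
    rw [stepFree, List.mem_append] at hs
    rcases hs with hs | hs
    · exact ⟨s, ((hmemf s).mp hs).1, List.prefix_rfl⟩
    · obtain ⟨j, _, rfl⟩ := hpieces_mem s hs
      exact ⟨x, hxS, List.prefix_append _ _⟩
  · -- new output incomparable with new free set
    intro s hs
    rw [stepFree, List.mem_append] at hs
    rcases hs with hs | hs
    · obtain ⟨hsS, hsx⟩ := (hmemf s).mp hs
      exact (incomp_ext (hxs_incomp s hsS hsx) (List.prefix_append _ _)).symm
    · obtain ⟨j, hj, rfl⟩ := hpieces_mem s hs
      exact hpad_piece j hj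

noncomputable def K (f : ℕ → ℕ) (n : ℕ) : ℝ := ∑ m ∈ Finset.range n, w (f (m+1))

lemma kraft_bound {f : ℕ → ℕ} (hK : (∑' n : ℕ, ((2 : ENNReal) ^ f (n + 1))⁻¹) ≤ 1) (n : ℕ) :
    K f n ≤ 1 := by
  have h1 : ∑ m ∈ Finset.range n, ((2:ENNReal) ^ f (m+1))⁻¹ ≤ 1 :=
    le_trans (ENNReal.sum_le_tsum _) hK
  have h2 : ∀ m, ((2:ENNReal) ^ f (m+1))⁻¹ = ENNReal.ofReal (w (f (m+1))) := by
    intro m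
    rw [w, ENNReal.ofReal_inv_of_pos (by positivity), ENNReal.ofReal_pow (by norm_num)]
    norm_num
  rw [Finset.sum_congr rfl (fun m _ => h2 m),
    ← ENNReal.ofReal_sum_of_nonneg (fun m _ => (w_pos _).le)] at h1
  exact ENNReal.ofReal_le_one.mp h1

lemma invariant {f : ℕ → ℕ} (hK1 : ∀ n, K f n ≤ 1) : ∀ n : ℕ,
    (run f n).Pairwise Incomp ∧ ((run f n).map List.length).Nodup ∧
    mea (run f n) = 1 - K f n ∧
    ∀ m, m < n → ∀ s ∈ run f n, Incomp (gfun f m) s := by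
  intro n
  induction n with
  | zero =>
    refine ⟨List.pairwise_singleton _ _, by simp [run], ?_, fun m hm => by omega⟩
    show mea [[]] = 1 - K f 0
    simp [mea, K, w]
  | succ n ih =>
    obtain ⟨h1, h2, h3, h4⟩ := ih
    have hKs : K f (n+1) = K f n + w (f (n+1)) := Finset.sum_range_succ _ _
    have hm : w (f (n+1)) ≤ mea (run f n) := by
      have := hK1 (n+1)
      rw [hKs] at this
      rw [h3]
      linarith
    obtain ⟨hxS, hpw', hnd', hmea', hext, hout⟩ := step_all h1 h2 hm
    have hrun : run f (n+1) = stepFree (f (n+1)) (run f n) := rfl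
    refine ⟨by rw [hrun]; exact hpw', by rw [hrun]; exact hnd', ?_, ?_⟩
    · rw [hrun, hmea', h3, hKs]
      ring
    · intro m hm' s hs
      rw [hrun] at hs
      rcases Nat.lt_succ_iff_lt_or_eq.mp hm' with hlt | rfl
      · obtain ⟨t, htS, hts⟩ := hext s hs
        exact incomp_ext (h4 m hlt t htS) hts
      · exact hout s hs

lemma gfun_length (f : ℕ → ℕ) (n : ℕ) : (gfun f n).length = f (n+1) :=
  pad_length _ _ (pick_length_le _ _)

lemma gfun_incomp {f : ℕ → ℕ} (hK1 : ∀ n, K f n ≤ 1) {m n : ℕ} (h : m < n) :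
    Incomp (gfun f m) (gfun f n) := by
  obtain ⟨h1, h2, h3, h4⟩ := invariant hK1 n
  have hm : w (f (n+1)) ≤ mea (run f n) := by
    have h5 := hK1 (n+1)
    rw [show K f (n+1) = K f n + w (f (n+1)) from Finset.sum_range_succ _ _] at h5
    rw [h3]
    linarith
  obtain ⟨hxS, -, -, -, -, -⟩ := step_all h1 h2 hm
  exact incomp_ext (h4 m h _ hxS) (List.prefix_append _ _)

section Computability

lemma filterMap_ite {β : Type*} (C : β → Prop) [DecidablePred C] (L : List β) :
    (L.filterMap fun b => if C b then some b else none) = L.filter fun b => decide (C b) := by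
  induction L with
  | nil => rfl
  | cons a t ih => by_cases h : C a <;> simp [List.filterMap_cons, List.filter_cons, h, ih]

lemma replicate_primrec : Primrec (fun n : ℕ => List.replicate n false) := by
  have h : Primrec fun n : ℕ => (List.range n).map (fun _ => false) :=
    Primrec.list_map Primrec.list_range (Primrec₂.const false)
  apply h.of_eq
  intro n
  have := List.eq_replicate_of_mem (a := false) (l := (List.range n).map (fun _ => false))
    (by intro b hb; rw [List.mem_map] at hb; obtain ⟨-, -, rfl⟩ := hb; rfl)
  rwa [List.length_map, List.length_range] at this

lemma pickU_primrec : Primrec fun p : ℕ × List (List Bool) => pick p.1 p.2 := by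
  have hg : Primrec fun q : (ℕ × List (List Bool)) × List Bool =>
      if q.2.length ≤ q.1.1 then some q.2 else none :=
    Primrec.ite (Primrec.nat_le.comp (Primrec.list_length.comp Primrec.snd)
        (Primrec.fst.comp Primrec.fst)) (Primrec.option_some.comp Primrec.snd)
      (Primrec.const none)
  have hfil : Primrec fun p : ℕ × List (List Bool) =>
      p.2.filter fun s => decide (s.length ≤ p.1) :=
    (Primrec.listFilterMap Primrec.snd hg.to₂).of_eq fun p =>
      filterMap_ite (fun s : List Bool => s.length ≤ p.1) p.2
  have hh : Primrec fun q : (ℕ × List (List Bool)) × (List Bool × List Bool) =>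
      better q.2.1 q.2.2 := by
    have h2 : Primrec fun q : (ℕ × List (List Bool)) × (List Bool × List Bool) =>
        if q.2.1.length < q.2.2.length then q.2.2 else q.2.1 :=
      Primrec.ite (Primrec.nat_lt.comp
          (Primrec.list_length.comp (Primrec.fst.comp Primrec.snd))
          (Primrec.list_length.comp (Primrec.snd.comp Primrec.snd)))
        (Primrec.snd.comp Primrec.snd) (Primrec.fst.comp Primrec.snd)
    exact h2.of_eq fun q => rfl
  have h3 : Primrec fun p : ℕ × List (List Bool) =>
      (p.2.filter fun s => decide (s.length ≤ p.1)).foldl (fun s b => better s b) [] :=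
    Primrec.list_foldl hfil (Primrec.const []) hh.to₂
  exact h3.of_eq fun p => rfl

lemma padU_primrec : Primrec fun p : ℕ × List Bool => pad p.1 p.2 := by
  have h : Primrec fun p : ℕ × List Bool =>
      p.2 ++ List.replicate (p.1 - p.2.length) false :=
    Primrec₂.comp Primrec.list_append Primrec.snd
      (replicate_primrec.comp (Primrec₂.comp Primrec.nat_sub Primrec.fst
        (Primrec.list_length.comp Primrec.snd)))
  exact h.of_eq fun p => rfl

lemma piecesU_primrec : Primrec fun p : ℕ × List Bool => pieces p.1 p.2 := by
  have hrep : Primrec fun q : (ℕ × List Bool) × ℕ =>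
      List.replicate q.2 false ++ [true] :=
    Primrec₂.comp (f := fun (l : List Bool) (a : Bool) => l ++ [a]) Primrec.list_concat
      (replicate_primrec.comp Primrec.snd) (Primrec.const true)
  have hg : Primrec fun q : (ℕ × List Bool) × ℕ =>
      q.1.2 ++ (List.replicate q.2 false ++ [true]) :=
    Primrec₂.comp Primrec.list_append (Primrec.snd.comp Primrec.fst) hrep
  have h : Primrec fun p : ℕ × List Bool =>
      (List.range (p.1 - p.2.length)).map
        (fun j => p.2 ++ (List.replicate j false ++ [true])) :=
    Primrec.list_map (Primrec.list_range.comp (Primrec₂.comp Primrec.nat_sub Primrec.fst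
      (Primrec.list_length.comp Primrec.snd))) hg.to₂
  exact h.of_eq fun p => rfl

lemma stepFreeU_primrec : Primrec fun p : ℕ × List (List Bool) => stepFree p.1 p.2 := by
  have hg : Primrec fun q : (ℕ × List (List Bool)) × List Bool =>
      if q.2 ≠ pick q.1.1 q.1.2 then some q.2 else none :=
    Primrec.ite ((Primrec.eq.comp Primrec.snd (pickU_primrec.comp Primrec.fst)).not)
      (Primrec.option_some.comp Primrec.snd) (Primrec.const none)
  have hfil : Primrec fun p : ℕ × List (List Bool) => p.2.filter (· ≠ pick p.1 p.2) :=
    (Primrec.listFilterMap Primrec.snd hg.to₂).of_eq fun p => by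
      rw [filterMap_ite (fun s : List Bool => s ≠ pick p.1 p.2) p.2]
  have hpieces : Primrec fun p : ℕ × List (List Bool) => pieces p.1 (pick p.1 p.2) :=
    piecesU_primrec.comp (Primrec.pair Primrec.fst pickU_primrec)
  have h : Primrec fun p : ℕ × List (List Bool) =>
      p.2.filter (· ≠ pick p.1 p.2) ++ pieces p.1 (pick p.1 p.2) :=
    Primrec₂.comp Primrec.list_append hfil hpieces
  exact h.of_eq fun p => rfl

attribute [irreducible] stepFree pick pieces pad better

lemma run_computable {f : ℕ → ℕ} (hf : Computable f) : Computable (run f) := by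
  have hh : Computable fun q : ℕ × (ℕ × List (List Bool)) => stepFree (f (q.2.1+1)) q.2.2 :=
    (stepFreeU_primrec.to_comp).comp
      (Computable.pair (hf.comp (Computable.succ.comp (Computable.fst.comp Computable.snd)))
        (Computable.snd.comp Computable.snd))
  have h := Computable.nat_rec Computable.id (Computable.const ([[]] : List (List Bool))) hh.to₂
  apply h.of_eq
  intro n
  induction n with
  | zero => rfl
  | succ n ih =>
    simp only [id_eq] at ih ⊢
    rw [show run f (n+1) = stepFree (f (n+1)) (run f n) from rfl, ← ih]

lemma gfun_computable {f : ℕ → ℕ} (hf : Computable f) : Computable (gfun f) := by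
  have h : Computable fun n => pad (f (n+1)) (pick (f (n+1)) (run f n)) :=
    (padU_primrec.to_comp).comp (Computable.pair (hf.comp Computable.succ)
      ((pickU_primrec.to_comp).comp (Computable.pair (hf.comp Computable.succ)
        (run_computable hf))))
  exact h.of_eq fun n => rfl

end Computability

end KC

theorem stmt_4 (f : ℕ → ℕ) (hf : Computable f) (hK : kraftSum f ≤ 1) :
    ∃ g : ℕ → List Bool, Computable g ∧ Function.Injective g ∧
      (∀ m n : ℕ, g m <+: g n → m = n) ∧ ∀ n : ℕ, (g n).length = f (n + 1) := by
  have hK1 : ∀ n, KC.K f n ≤ 1 := KC.kraft_bound (by simpa [kraftSum] using hK)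
  have hpre : ∀ m n, KC.gfun f m <+: KC.gfun f n → m = n := by
    intro m n hp
    rcases lt_trichotomy m n with h | h | h
    · exact absurd hp (KC.gfun_incomp hK1 h).1
    · exact h
    · exact absurd hp (KC.gfun_incomp hK1 h).2
  exact ⟨KC.gfun f, KC.gfun_computable hf,
    fun m n h => hpre m n (h ▸ List.prefix_rfl), hpre, fun n => KC.gfun_length f n⟩
end

section
/- Let V be an optimal computer. For every computer C there exist an oracle deterministic Turing machine M and d ∈ ℕ such that for all n ∈ ℕ⁺, M with oracle dom V ↾ (n + d) on input n outputs (an encoding of) the finite set dom C ↾ n. -/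
open scoped Classical ENNReal

namespace Stmt8

open Nat.Partrec (Code)
open Nat.Partrec.Code Encodable

lemma mem_allOfLength : ∀ {n : ℕ} {p : List Bool}, p ∈ allOfLength n ↔ p.length = n := by
  intro n
  induction n with
  | zero => intro p; simp [allOfLength, List.length_eq_zero_iff]
  | succ n ih =>
    intro p
    simp only [allOfLength, List.mem_flatMap, List.mem_cons, List.not_mem_nil, or_false]
    constructor
    · rintro ⟨l, hl, rfl | rfl⟩ <;> simp [ih.1 hl]
    · intro hp
      match p with
      | [] => simp at hp
      | b :: l =>
        refine ⟨l, ih.2 (by simpa using hp), ?_⟩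
        cases b <;> simp

lemma mem_allUpTo {n : ℕ} {p : List Bool} : p ∈ allUpTo n ↔ p.length ≤ n := by
  simp only [allUpTo, List.mem_flatMap, List.mem_range, mem_allOfLength]
  constructor
  · rintro ⟨i, hi, rfl⟩; omega
  · intro h; exact ⟨p.length, by omega, rfl⟩

lemma foldr_and_eq_true {α : Type*} {g : α → Bool} :
    ∀ L : List α, (L.foldr (fun a b => g a && b) true = true) ↔ ∀ a ∈ L, g a = true := by
  intro L
  induction L with
  | nil => simp
  | cons a L ih => simp [ih]

lemma le_foldr_max {α : Type*} (f : α → ℕ) :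
    ∀ (L : List α) (a : α), a ∈ L → f a ≤ (L.map f).foldr max 0 := by
  intro L
  induction L with
  | nil => simp
  | cons b L ih =>
    intro a ha
    rcases List.mem_cons.1 ha with rfl | ha
    · simp [le_max_iff]
    · simpa [le_max_iff] using Or.inr (ih a ha)

lemma exists_forall_le {α : Type*} {P : ℕ → α → Prop}
    (mono : ∀ {k k' : ℕ} {a : α}, k ≤ k' → P k a → P k' a) :
    ∀ L : List α, (∀ a ∈ L, ∃ k, P k a) → ∃ T, ∀ a ∈ L, P T a := by
  intro L
  induction L with
  | nil => exact fun _ => ⟨0, by simp⟩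
  | cons a L ih =>
    intro h
    obtain ⟨k, hk⟩ := h a List.mem_cons_self
    obtain ⟨T, hT⟩ := ih fun b hb => h b (List.mem_cons_of_mem _ hb)
    refine ⟨max k T, ?_⟩
    intro b hb
    rcases List.mem_cons.1 hb with rfl | hb
    · exact mono (le_max_left _ _) hk
    · exact mono (le_max_right _ _) (hT b hb)

lemma evaln_isSome_mono {k k' : ℕ} {c : Code} {m : ℕ} (h : k ≤ k')
    (hs : (c.evaln k m).isSome = true) : (c.evaln k' m).isSome = true := by
  rw [Option.isSome_iff_exists] at hs ⊢
  obtain ⟨v, hv⟩ := hs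
  exact ⟨v, evaln_mono h hv⟩

lemma filter_eq_foldr {α : Type*} (g : α → Bool) :
    ∀ L : List α, L.filter g = L.foldr (fun a r => cond (g a) (a :: r) r) [] := by
  intro L
  induction L with
  | nil => rfl
  | cons a L ih =>
    rw [List.filter_cons, List.foldr_cons, ← ih]
    cases g a <;> simp

lemma primrec_allOfLength : Primrec allOfLength := by
  have h : Primrec fun p : (ℕ × List (List Bool)) × List Bool =>
      [false :: p.2, true :: p.2] :=
    Primrec.list_cons.comp (Primrec.list_cons.comp (Primrec.const false) Primrec.snd)
      (Primrec.list_cons.comp (Primrec.list_cons.comp (Primrec.const true) Primrec.snd)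
        (Primrec.const []))
  have hstep : Primrec₂ fun (_ : ℕ) (ih : List (List Bool)) =>
      ih.flatMap fun l => [false :: l, true :: l] :=
    (Primrec.list_flatMap Primrec.snd h.to₂ :
      Primrec fun p : ℕ × List (List Bool) => _).to₂
  refine (Primrec.nat_rec₁ [[]] hstep).of_eq fun n => ?_
  induction n with
  | zero => rfl
  | succ n ih => simp only [allOfLength]; rw [← ih]

lemma primrec_allUpTo : Primrec allUpTo :=
  Primrec.list_flatMap (Primrec.list_range.comp Primrec.succ)
    ((primrec_allOfLength.comp Primrec.snd).to₂)

end Stmt8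

namespace Stmt8

open Nat.Partrec (Code)
open Nat.Partrec.Code Encodable

/-- Auxiliary partial function: on input `p`, the least `k` such that `cC.evaln k` halts on
`encode p`, returned in unary (`(List.range k).map fun _ => true`). -/
def runCode (cC : Nat.Partrec.Code) : List Bool →. List Bool := fun p =>
  (Nat.rfind fun k => Part.some ((cC.evaln k (Encodable.encode p)).isSome)).map
    fun k => (List.range k).map fun _ => true

lemma runCode_partrec (cC : Code) : Partrec (runCode cC) := by
  have hpred : Computable₂ fun (p : List Bool) (k : ℕ) => (cC.evaln k (Encodable.encode p)).isSome :=
    (Primrec.option_isSome.comp (primrec_evaln.comp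
      ((Primrec.snd.pair (Primrec.const cC)).pair
        (Primrec.encode.comp Primrec.fst)))).to_comp
  have hmap : Computable₂ fun (_ : List Bool) (k : ℕ) => (List.range k).map fun _ => (true : Bool) :=
    (Primrec.list_map (Primrec.list_range.comp Primrec.snd)
      ((Primrec.const true).comp Primrec.fst).to₂ : Primrec fun p : List Bool × ℕ => _).to_comp
  exact Partrec.map (Partrec.rfind hpred.partrec₂) hmap

lemma runCode_dom {cC : Code} {p : List Bool} :
    (runCode cC p).Dom ↔ ∃ k, (cC.evaln k (Encodable.encode p)).isSome = true := by
  show (Nat.rfind _).Dom ↔ _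
  refine Nat.rfind_dom'.trans ?_
  constructor
  · rintro ⟨k, hk, -⟩
    exact ⟨k, (Part.mem_some_iff.1 hk).symm⟩
  · rintro ⟨k, hk⟩
    exact ⟨k, Part.mem_some_iff.2 hk.symm, fun _ => trivial⟩

end Stmt8

open Stmt8 Nat.Partrec.Code Encodable in
theorem stmt_8 (V : Computer) (hV : V.IsOptimal) (C : Computer) :
    ∃ M : List (List Bool) → ℕ →. List (List Bool), Partrec₂ M ∧ ∃ d : ℕ,
      ∀ n : ℕ, 1 ≤ n →
        M (restrictList (domSet V) (n + d)) n =
          Part.some (restrictList (domSet C) n) := by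
  obtain ⟨cV, hcV⟩ := exists_code.1 V.partrec
  obtain ⟨cC, hcC⟩ := exists_code.1 C.partrec
  have hevalV : ∀ q : List Bool, cV.eval (encode q) = (V.f q).map encode := by
    intro q; rw [hcV]; simp [Encodable.encodek]
  have hevalC : ∀ p : List Bool, cC.eval (encode p) = (C.f p).map encode := by
    intro p; rw [hcC]; simp [Encodable.encodek]
  -- halting of evaln vs. domains
  have hdomC : ∀ p : List Bool, (∃ k, (cC.evaln k (encode p)).isSome = true) ↔ (C.f p).Dom := by
    intro p
    constructor
    · rintro ⟨k, hk⟩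
      obtain ⟨v, hv⟩ := Option.isSome_iff_exists.1 hk
      have hvE : v ∈ cC.eval (encode p) := evaln_sound hv
      rw [hevalC] at hvE
      obtain ⟨a, ha, -⟩ := Part.mem_map_iff _ |>.1 hvE
      exact Part.dom_iff_mem.2 ⟨a, ha⟩
    · intro h
      have : encode ((C.f p).get h) ∈ cC.eval (encode p) := by
        rw [hevalC]
        exact Part.mem_map _ (Part.get_mem h)
      obtain ⟨k, hk⟩ := evaln_complete.1 this
      exact ⟨k, Option.isSome_iff_exists.2 ⟨_, hk⟩⟩
  have hEdom : ∀ p : List Bool, (runCode cC p).Dom ↔ (C.f p).Dom := fun p =>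
    runCode_dom.trans (hdomC p)
  -- the auxiliary computer with the same domain as C, outputting halting times in unary
  let E : Computer :=
    ⟨runCode cC, runCode_partrec cC, fun p q hp hq hpre =>
      C.prefixFree p q ((hEdom p).1 hp) ((hEdom q).1 hq) hpre⟩
  obtain ⟨d, hd⟩ := hV E
  refine ⟨fun L n =>
    (Nat.rfind fun T =>
        Part.some (L.foldr (fun q b => (cV.evaln T (encode q)).isSome && b) true)).map
      fun T =>
        (allUpTo n).filter fun p =>
          (cC.evaln
            ((L.map fun q =>
              ((Encodable.decode ((cV.evaln T (encode q)).getD 0) : Option (List Bool)).getD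
                []).length).foldr max 0)
            (encode p)).isSome, ?_, d, ?_⟩
  · -- partial recursiveness of M
    have hpred : Computable₂ fun (x : List (List Bool) × ℕ) (T : ℕ) =>
        x.1.foldr (fun q b => (cV.evaln T (encode q)).isSome && b) true := by
      have hc : Primrec fun y : ((List (List Bool) × ℕ) × ℕ) × (List Bool × Bool) =>
          (cV.evaln y.1.2 (encode y.2.1)).isSome :=
        Primrec.option_isSome.comp (primrec_evaln.comp
          (((Primrec.snd.comp Primrec.fst).pair (Primrec.const cV)).pair
            (Primrec.encode.comp (Primrec.fst.comp Primrec.snd))))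
      have hh : Primrec₂ fun (a : (List (List Bool) × ℕ) × ℕ) (pr : List Bool × Bool) =>
          (cV.evaln a.2 (encode pr.1)).isSome && pr.2 :=
        (Primrec.cond hc (Primrec.snd.comp Primrec.snd) (Primrec.const false)).to₂.of_eq
          (fun a pr => by
            cases h : (cV.evaln a.2 (encode pr.1)).isSome <;> simp [h])
      exact (Primrec.list_foldr (Primrec.fst.comp Primrec.fst)
        (Primrec.const true) hh).to_comp
    have hT' : Primrec fun z : (List (List Bool) × ℕ) × ℕ =>
        (z.1.1.map fun q =>
          ((Encodable.decode ((cV.evaln z.2 (encode q)).getD 0) : Option (List Bool)).getD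
            []).length).foldr max 0 := by
      have hinner : Primrec fun y : ((List (List Bool) × ℕ) × ℕ) × List Bool =>
          ((Encodable.decode ((cV.evaln y.1.2 (encode y.2)).getD 0) : Option (List Bool)).getD
            []).length :=
        Primrec.list_length.comp (Primrec.option_getD.comp
          ((Primrec.decode (α := List Bool)).comp (Primrec.option_getD.comp
            (primrec_evaln.comp
              (((Primrec.snd.comp Primrec.fst).pair (Primrec.const cV)).pair
                (Primrec.encode.comp Primrec.snd)))
            (Primrec.const 0)))
          (Primrec.const []))
      exact Primrec.list_foldr (Primrec.list_map (Primrec.fst.comp Primrec.fst) hinner.to₂)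
        (Primrec.const 0)
        ((Primrec.nat_max.comp (Primrec.fst.comp Primrec.snd)
          (Primrec.snd.comp Primrec.snd)).to₂)
    have hG : Computable₂ fun (x : List (List Bool) × ℕ) (T : ℕ) =>
        (allUpTo x.2).filter fun p =>
          (cC.evaln
            ((x.1.map fun q =>
              ((Encodable.decode ((cV.evaln T (encode q)).getD 0) : Option (List Bool)).getD
                []).length).foldr max 0)
            (encode p)).isSome := by
      have hc : Primrec fun y : ((List (List Bool) × ℕ) × ℕ) × (List Bool × List (List Bool)) =>
          (cC.evaln
            ((y.1.1.1.map fun q =>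
              ((Encodable.decode ((cV.evaln y.1.2 (encode q)).getD 0) : Option (List Bool)).getD
                []).length).foldr max 0)
            (encode y.2.1)).isSome :=
        Primrec.option_isSome.comp (primrec_evaln.comp
          ((((hT'.comp Primrec.fst).pair (Primrec.const cC)).pair
            (Primrec.encode.comp (Primrec.fst.comp Primrec.snd)))))
      have := Primrec.list_foldr
        (primrec_allUpTo.comp (Primrec.snd.comp Primrec.fst))
        (Primrec.const ([] : List (List Bool)))
        ((Primrec.cond hc
          (Primrec.list_cons.comp (Primrec.fst.comp Primrec.snd) (Primrec.snd.comp Primrec.snd))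
          (Primrec.snd.comp Primrec.snd)).to₂)
      refine (this.of_eq fun z => ?_).to_comp
      dsimp only
      exact (filter_eq_foldr _ _).symm
    exact Partrec.map (Partrec.rfind hpred.partrec₂) hG
  · -- correctness
    intro n hn
    set L := restrictList (domSet V) (n + d) with hL
    have hLmem : ∀ q ∈ L, (V.f q).Dom ∧ q.length ≤ n + d := by
      intro q hq
      rw [hL, restrictList, List.mem_filter] at hq
      exact ⟨of_decide_eq_true hq.2, mem_allUpTo.1 hq.1⟩
    have hhalt : ∀ q ∈ L, ∃ k, (cV.evaln k (encode q)).isSome = true := by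
      intro q hq
      have hqd := (hLmem q hq).1
      have : encode ((V.f q).get hqd) ∈ cV.eval (encode q) := by
        rw [hevalV]; exact Part.mem_map _ (Part.get_mem hqd)
      obtain ⟨k, hk⟩ := evaln_complete.1 this
      exact ⟨k, Option.isSome_iff_exists.2 ⟨_, hk⟩⟩
    obtain ⟨T0, hT0⟩ := exists_forall_le (P := fun k q => (cV.evaln k (encode q)).isSome = true)
      (fun h => evaln_isSome_mono h) L hhalt
    have hdom : (Nat.rfind fun T =>
        Part.some (L.foldr (fun q b => (cV.evaln T (encode q)).isSome && b) true)).Dom := by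
      refine Nat.rfind_dom'.2 ?_
      exact ⟨T0, Part.mem_some_iff.2 ((foldr_and_eq_true L).2 hT0).symm, fun _ => trivial⟩
    set T := (Nat.rfind fun T =>
        Part.some (L.foldr (fun q b => (cV.evaln T (encode q)).isSome && b) true)).get hdom
      with hT
    have hTmem := Part.get_mem hdom
    have hall : ∀ q ∈ L, (cV.evaln T (encode q)).isSome = true := by
      have := Nat.rfind_spec hTmem
      exact (foldr_and_eq_true L).1 (Part.mem_some_iff.1 this).symm
    rw [Part.eq_some_iff]
    refine Part.mem_map_iff _ |>.2 ⟨T, hTmem, ?_⟩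
    rw [restrictList]
    apply List.filter_congr
    intro p hp
    by_cases hpC : p ∈ domSet C
    · rw [decide_eq_true hpC]
      have hE : (runCode cC p).Dom := (hEdom p).2 hpC
      obtain ⟨q, hq1, hq2⟩ := hd p hE
      obtain ⟨k, hkmem, hks⟩ := Part.mem_map_iff _ |>.1 (Part.get_mem hE)
      have hkp : (cC.evaln k (encode p)).isSome = true :=
        (Part.mem_some_iff.1 (Nat.rfind_spec hkmem)).symm
      have hqL : q ∈ L := by
        rw [hL, restrictList, List.mem_filter]
        refine ⟨mem_allUpTo.2 ?_, decide_eq_true (show q ∈ domSet V from ?_)⟩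
        · exact hq2.trans (Nat.add_le_add_right (mem_allUpTo.1 hp) d)
        · show (V.f q).Dom
          rw [hq1]; trivial
      have hqT := hall q hqL
      obtain ⟨v, hv⟩ := Option.isSome_iff_exists.1 hqT
      have hvE : v ∈ cV.eval (encode q) := evaln_sound hv
      rw [hevalV q, hq1, Part.map_some, Part.mem_some_iff] at hvE
      have hvval : v = encode ((E.f p).get hE) := hvE
      have hlen : ((Encodable.decode ((cV.evaln T (encode q)).getD 0) :
          Option (List Bool)).getD []).length = k := by
        rw [hv]
        simp only [Option.getD_some, hvval, Encodable.encodek]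
        rw [show (E.f p).get hE = (List.range k).map fun _ => true from hks.symm]
        simp
      have hkle : k ≤ (L.map fun q =>
          ((Encodable.decode ((cV.evaln T (encode q)).getD 0) : Option (List Bool)).getD
            []).length).foldr max 0 := hlen ▸ le_foldr_max
          (fun q => ((Encodable.decode ((cV.evaln T (encode q)).getD 0) :
            Option (List Bool)).getD []).length) L q hqL
      exact evaln_isSome_mono hkle hkp
    · rw [decide_eq_false hpC]
      cases hne : (cC.evaln ((L.map fun q =>
          ((Encodable.decode ((cV.evaln T (encode q)).getD 0) : Option (List Bool)).getD
            []).length).foldr max 0) (encode p)).isSome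
      · rfl
      · exfalso
        obtain ⟨v, hv⟩ := Option.isSome_iff_exists.1 hne
        have hvE : v ∈ cC.eval (encode p) := evaln_sound hv
        rw [hevalC] at hvE
        obtain ⟨a, ha, -⟩ := Part.mem_map_iff _ |>.1 hvE
        exact hpC (Part.dom_iff_mem.2 ⟨a, ha⟩)
end

section
/- Let V be an optimal computer and M a deterministic Turing machine computing V. Then n = H(T^M_n, n) + O(1) = H(T^M_n) + O(1) for all n ≥ L_M, where T^M_n is the maximum running time of M over all halting inputs of length at most n, and L_M is the minimum length of a halting input for M. -/
open scoped Classical ENNReal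

namespace S16
open Nat.Partrec (Code)
open Nat.Partrec.Code Encodable

/-! ### Basics about `Computer.H` -/

lemma H_le {C : Computer} {s p : List Bool} (h : C.f p = Part.some s) :
    C.H s ≤ (p.length : ℕ∞) :=
  sInf_le ⟨p, h, rfl⟩

lemma H_spec {C : Computer} {s : List Bool} (h : C.H s ≠ ⊤) :
    ∃ p, C.f p = Part.some s ∧ (p.length : ℕ∞) = C.H s := by
  classical
  set S : Set ℕ∞ :=
    {n : ℕ∞ | ∃ p : List Bool, C.f p = Part.some s ∧ (p.length : ℕ∞) = n} with hSdef
  have hCH : C.H s = sInf S := rfl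
  set S' : Set ℕ := {m : ℕ | (m : ℕ∞) ∈ S} with hS'def
  have hSco : ∀ x ∈ S, ∃ m : ℕ, x = (m : ℕ∞) ∧ m ∈ S' := by
    rintro x ⟨p, hp, hl⟩
    exact ⟨p.length, hl.symm, ⟨p, hp, rfl⟩⟩
  have hne' : S'.Nonempty := by
    rcases Set.eq_empty_or_nonempty S' with hemp | hne'
    · exfalso
      apply h
      rw [hCH, sInf_eq_top]
      intro a ha
      obtain ⟨m, rfl, hm⟩ := hSco a ha
      rw [hemp] at hm
      exact absurd hm (Set.notMem_empty m)
    · exact hne'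
  have hk : ((sInf S' : ℕ) : ℕ∞) ∈ S := Nat.sInf_mem hne'
  have hinf : ((sInf S' : ℕ) : ℕ∞) = sInf S := by
    apply le_antisymm
    · apply le_sInf
      intro b hb
      obtain ⟨m, rfl, hm⟩ := hSco b hb
      exact_mod_cast Nat.sInf_le hm
    · exact sInf_le hk
  obtain ⟨p, hp, hl⟩ := hk
  exact ⟨p, hp, by rw [hl, hinf, hCH]⟩

lemma opt_H {U : Computer} (hU : U.IsOptimal) (C : Computer) :
    ∃ d : ℕ, ∀ s, U.H s ≤ C.H s + d := by
  obtain ⟨d, hd⟩ := hU C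
  refine ⟨d, fun s => ?_⟩
  rcases eq_or_ne (C.H s) ⊤ with h | h
  · rw [h]; simp
  obtain ⟨p, hp, hl⟩ := H_spec h
  have hdom : (C.f p).Dom := by rw [hp]; trivial
  obtain ⟨q, hq, hql⟩ := hd p hdom
  have hget : (C.f p).get hdom = s := by simp [hp]
  rw [hget] at hq
  calc U.H s ≤ (q.length : ℕ∞) := H_le hq
    _ ≤ ((p.length + d : ℕ) : ℕ∞) := by exact_mod_cast hql
    _ = (p.length : ℕ∞) + d := by push_cast; ring
    _ = C.H s + d := by rw [hl]

/-- A trivial computer halting exactly on the empty string. -/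
def trivComp : Computer where
  f := fun p => if p = [] then Part.some [] else Part.none
  partrec := by
    have h1 : Computable fun p : List Bool =>
        if p = [] then some ([] : List Bool) else none :=
      (Primrec.ite (Primrec.eq.comp Primrec.id (Primrec.const []))
        (Primrec.const (some [])) (Primrec.const none)).to_comp
    exact (Computable.ofOption h1).of_eq fun p => by by_cases h : p = [] <;> simp [h]
  prefixFree := by
    intro p q dp dq _
    by_cases hp : p = []
    · by_cases hq : q = []
      · rw [hp, hq]
      · simp [hq] at dq
    · simp [hp] at dp

lemma dom_nonempty {V : Computer} (hV : V.IsOptimal) : ∃ p, (V.f p).Dom := by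
  obtain ⟨d, hd⟩ := hV trivComp
  have hdom : (trivComp.f []).Dom := by simp [trivComp]
  obtain ⟨q, hq, -⟩ := hd [] hdom
  exact ⟨q, by rw [hq]; trivial⟩

/-- Mapping the output of a computer by a computable total function. -/
def mapComp (U : Computer) (g : List Bool → List Bool) (hg : Computable g) : Computer where
  f := fun q => (U.f q).map g
  partrec := U.partrec.map (hg.comp Computable.snd).to₂
  prefixFree := fun p q dp dq hpq => U.prefixFree p q dp dq hpq

lemma mapComp_H_le (U : Computer) (g : List Bool → List Bool) (hg : Computable g)
    (s : List Bool) : (mapComp U g hg).H (g s) ≤ U.H s := by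
  rcases eq_or_ne (U.H s) ⊤ with h | h
  · rw [h]; exact le_top
  obtain ⟨p, hp, hl⟩ := H_spec h
  rw [← hl]
  exact H_le (show (U.f p).map g = Part.some (g s) by rw [hp, Part.map_some])

end S16
namespace S16
open Nat.Partrec (Code)
open Nat.Partrec.Code Encodable

/-! ### Lists of all strings -/

lemma mem_allOfLength {n : ℕ} {p : List Bool} : p ∈ allOfLength n ↔ p.length = n := by
  induction n generalizing p with
  | zero => simp [allOfLength, List.length_eq_zero_iff]
  | succ n ih =>
    simp only [allOfLength, List.mem_flatMap]
    constructor
    · rintro ⟨l, hl, hp⟩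
      have hll := ih.1 hl
      simp only [List.mem_cons, List.not_mem_nil, or_false] at hp
      rcases hp with rfl | rfl <;> simp [hll]
    · intro hp
      cases p with
      | nil => simp at hp
      | cons b t =>
        refine ⟨t, ih.2 (Nat.succ_injective hp), ?_⟩
        cases b <;> simp

lemma mem_allUpTo {n : ℕ} {p : List Bool} : p ∈ allUpTo n ↔ p.length ≤ n := by
  simp only [allUpTo, List.mem_flatMap, List.mem_range, mem_allOfLength]
  constructor
  · rintro ⟨i, hi, rfl⟩; omega
  · intro h; exact ⟨p.length, by omega, rfl⟩

lemma finite_len_le (n : ℕ) : {p : List Bool | p.length ≤ n}.Finite :=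
  Set.Finite.subset (allUpTo n).finite_toSet fun p hp => mem_allUpTo.2 hp

/-! ### foldr max lemmas -/

lemma le_foldr_max {β : Type*} {w : β → ℕ} {l : List β} {a : β} (ha : a ∈ l) :
    w a ≤ l.foldr (fun x acc => max (w x) acc) 0 := by
  induction l with
  | nil => simp at ha
  | cons b t ih =>
    rcases List.mem_cons.1 ha with rfl | ha'
    · exact le_max_left _ _
    · exact le_trans (ih ha') (le_max_right _ _)

lemma foldr_max_le {β : Type*} {w : β → ℕ} {l : List β} {B : ℕ} (h : ∀ a ∈ l, w a ≤ B) :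
    l.foldr (fun x acc => max (w x) acc) 0 ≤ B := by
  induction l with
  | nil => simp
  | cons b t ih =>
    exact max_le (h b List.mem_cons_self) (ih fun a ha => h a (List.mem_cons_of_mem b ha))

/-! ### find? over ranges -/

lemma find?_range'_spec {p : ℕ → Bool} :
    ∀ (m s j : ℕ), (List.range' s m).find? p = some j →
      p j = true ∧ s ≤ j ∧ ∀ i, s ≤ i → i < j → p i = false
  | 0, s, j => by simp
  | m + 1, s, j => by
    rw [List.range'_succ]
    intro h
    by_cases hs : p s
    · rw [List.find?_cons_of_pos hs] at h
      obtain rfl : s = j := by simpa using h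
      exact ⟨hs, le_refl _, fun i h1 h2 => absurd h2 (by omega)⟩
    · rw [List.find?_cons_of_neg hs] at h
      obtain ⟨h1, h2, h3⟩ := find?_range'_spec m (s + 1) j h
      refine ⟨h1, by omega, fun i hi1 hi2 => ?_⟩
      rcases eq_or_lt_of_le hi1 with rfl | hlt
      · simpa using hs
      · exact h3 i hlt hi2

lemma find?_range_sInf {p : ℕ → Bool} {m j : ℕ} (h : (List.range m).find? p = some j) :
    j = sInf {t : ℕ | p t = true} := by
  rw [List.range_eq_range'] at h
  obtain ⟨h1, -, h3⟩ := find?_range'_spec m 0 j h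
  have hj : j ∈ {t : ℕ | p t = true} := h1
  apply le_antisymm _ (Nat.sInf_le hj)
  by_contra hlt
  push_neg at hlt
  have hmem := Nat.sInf_mem ⟨j, hj⟩
  have hfalse := h3 _ (Nat.zero_le _) hlt
  rw [Set.mem_setOf_eq] at hmem
  rw [hmem] at hfalse
  cases hfalse

/-! ### encode bounds length -/

lemma length_le_encode : ∀ l : List Bool, l.length ≤ encode l
  | [] => Nat.zero_le _
  | b :: l => by
    rw [Encodable.encode_list_cons]
    have h1 := length_le_encode l
    have h2 := Nat.right_le_pair (encode b) (encode l)
    simp only [List.length_cons]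
    omega

/-! ### runtime and maxTime -/

lemma evaln_isSome_mono {c : Code} {x k k' : ℕ} (h : k ≤ k')
    (hs : (evaln k c x).isSome) : (evaln k' c x).isSome := by
  obtain ⟨y, hy⟩ := Option.isSome_iff_exists.1 hs
  exact Option.isSome_iff_exists.2
    ⟨y, Option.mem_def.1 (evaln_mono h (Option.mem_def.2 hy))⟩

lemma dom_of_evaln {V : Computer} {c : Code} (hc : ComputesVia c V) {k : ℕ} {p : List Bool}
    (h : (evaln k c (encode p)).isSome) : (V.f p).Dom := by
  obtain ⟨y, hy⟩ := Option.isSome_iff_exists.1 h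
  have hs := evaln_sound (Option.mem_def.2 hy)
  rw [hc p] at hs
  obtain ⟨a, ha, -⟩ := (Part.mem_map_iff _).1 hs
  exact Part.dom_iff_mem.2 ⟨a, ha⟩

lemma evaln_runtime {V : Computer} {c : Code} (hc : ComputesVia c V) {p : List Bool}
    (h : (V.f p).Dom) :
    evaln (runtime c p) c (encode p) = some (encode ((V.f p).get h)) := by
  have hmem : encode ((V.f p).get h) ∈ c.eval (encode p) := by
    rw [hc p]
    exact (Part.mem_map_iff _).2 ⟨_, Part.get_mem h, rfl⟩
  obtain ⟨k, hk⟩ := evaln_complete.1 hmem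
  have hne : {k : ℕ | (evaln k c (encode p)).isSome = true}.Nonempty :=
    ⟨k, by simp only [Set.mem_setOf_eq]; exact Option.isSome_iff_exists.2 ⟨_, Option.mem_def.1 hk⟩⟩
  have hrt := Nat.sInf_mem hne
  rw [Set.mem_setOf_eq] at hrt
  obtain ⟨y, hy⟩ := Option.isSome_iff_exists.1 hrt
  have hys := evaln_sound (Option.mem_def.2 hy)
  rw [hc p] at hys
  obtain ⟨a, ha, rfl⟩ := (Part.mem_map_iff _).1 hys
  rw [Part.get_eq_of_mem ha h]
  exact hy

lemma evaln_isSome_of_runtime_le {V : Computer} {c : Code} (hc : ComputesVia c V)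
    {p : List Bool} (h : (V.f p).Dom) {k : ℕ} (hk : runtime c p ≤ k) :
    (evaln k c (encode p)).isSome :=
  evaln_isSome_mono hk (by rw [evaln_runtime hc h]; rfl)

lemma runtime_le_of_evaln {c : Code} {p : List Bool} {k : ℕ}
    (h : (evaln k c (encode p)).isSome) : runtime c p ≤ k :=
  Nat.sInf_le h

lemma bddAbove_rtSet (V : Computer) (c : Code) (n : ℕ) :
    BddAbove {t : ℕ | ∃ p : List Bool, (V.f p).Dom ∧ p.length ≤ n ∧ runtime c p = t} := by
  apply Set.Finite.bddAbove
  apply Set.Finite.subset ((finite_len_le n).image (runtime c))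
  rintro t ⟨p, -, hl, rfl⟩
  exact ⟨p, hl, rfl⟩

lemma runtime_le_maxTime {V : Computer} {c : Code} {n : ℕ} {p : List Bool}
    (hd : (V.f p).Dom) (hl : p.length ≤ n) : runtime c p ≤ maxTime c V n :=
  le_csSup (bddAbove_rtSet V c n) ⟨p, hd, hl, rfl⟩

lemma exists_maxTime {V : Computer} {c : Code} {n : ℕ}
    (h : ∃ p : List Bool, (V.f p).Dom ∧ p.length ≤ n) :
    ∃ p : List Bool, (V.f p).Dom ∧ p.length ≤ n ∧ runtime c p = maxTime c V n := by
  obtain ⟨p, hd, hl⟩ := h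
  have hne : {t : ℕ | ∃ p : List Bool, (V.f p).Dom ∧ p.length ≤ n ∧
      runtime c p = t}.Nonempty := ⟨runtime c p, p, hd, hl, rfl⟩
  exact Nat.sSup_mem hne (bddAbove_rtSet V c n)

end S16
namespace S16
open Nat.Partrec (Code)
open Nat.Partrec.Code Encodable

/-! ### strToNat, inverse of natToStr -/

def strToNat (l : List Bool) : ℕ := l.foldl (fun a b => 2 * a + cond b 1 0) 1 - 1

lemma bits_eq_cons {n : ℕ} (h : n ≠ 0) :
    n.bits = (decide (n % 2 = 1)) :: (n / 2).bits := by
  have hb : Nat.bodd n = decide (n % 2 = 1) := by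
    have hm := Nat.mod_two_of_bodd n
    cases hbo : Nat.bodd n <;> rw [hbo] at hm <;> simp [hm]
  conv_lhs => rw [← Nat.bit_bodd_div2 n]
  rw [Nat.bits_append_bit _ _ (fun h0 => ?_), hb, Nat.div2_val]
  by_contra hbf
  have hbf' : Nat.bodd n = false := by simpa using hbf
  have := Nat.bit_bodd_div2 n
  rw [h0, hbf'] at this
  simp [Nat.bit_val] at this
  exact h this.symm

lemma bits_ne_nil {n : ℕ} (h : n ≠ 0) : n.bits ≠ [] := by
  rw [bits_eq_cons h]; simp

lemma foldl_bits {m : ℕ} (h : 1 ≤ m) :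
    (m.bits.dropLast.reverse).foldl (fun a b => 2 * a + cond b 1 0) 1 = m := by
  induction m using Nat.strong_induction_on with
  | _ m ih =>
    rcases eq_or_lt_of_le h with h1 | h2
    · rw [← h1]; simp [Nat.one_bits]
    · -- m ≥ 2
      have hm0 : m ≠ 0 := by omega
      have hd2 : 1 ≤ m / 2 := by omega
      have hd2' : m / 2 < m := Nat.div_lt_self (by omega) (by norm_num)
      rw [bits_eq_cons hm0]
      rw [List.dropLast_cons_of_ne_nil (bits_ne_nil (by omega))]
      rw [List.reverse_cons]
      rw [List.foldl_append]
      rw [ih (m / 2) hd2' hd2]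
      simp only [List.foldl_cons, List.foldl_nil]
      have hm2 : m % 2 = 0 ∨ m % 2 = 1 := by omega
      rcases hm2 with h2 | h2 <;> simp [h2] <;> omega

lemma strToNat_natToStr (n : ℕ) : strToNat (natToStr n) = n := by
  rw [strToNat, natToStr, foldl_bits (by omega)]
  omega

/-! ### Primrec lemmas -/

lemma primrec_bits : Primrec Nat.bits := by
  have h := Primrec.nat_strong_rec (fun (_ : Unit) n => n.bits)
    (g := fun (_ : Unit) (l : List (List Bool)) =>
      some (if l.length = 0 then [] else decide (l.length % 2 = 1) :: l.getD (l.length / 2) []))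
    ?_ ?_
  · exact h.comp (Primrec.const ()) Primrec.id
  · apply Primrec.option_some.comp
    apply Primrec.ite
    · exact Primrec.eq.comp (Primrec.list_length.comp Primrec.snd) (Primrec.const 0)
    · exact Primrec.const []
    · apply Primrec.list_cons.comp
      · exact (Primrec.eq.comp
          (Primrec.nat_mod.comp (Primrec.list_length.comp Primrec.snd) (Primrec.const 2))
          (Primrec.const 1)).decide
      · exact (Primrec.list_getD ([] : List Bool)).comp Primrec.snd
          (Primrec.nat_div.comp (Primrec.list_length.comp Primrec.snd) (Primrec.const 2))
  · intro _ n
    simp only [List.length_map, List.length_range]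
    rcases Nat.eq_zero_or_pos n with rfl | hn
    · simp
    · rw [if_neg (by omega)]
      have hlt : n / 2 < n := Nat.div_lt_self hn (by norm_num)
      have hget : ((List.range n).map Nat.bits).getD (n / 2) [] = (n / 2).bits := by
        rw [List.getD_eq_getElem?_getD, List.getElem?_map, List.getElem?_range hlt]
        rfl
      rw [hget, ← bits_eq_cons (by omega)]

lemma primrec_natToStr : Primrec natToStr := by
  have heq : natToStr = fun n => ((n + 1).bits).reverse.tail := by
    funext n; rw [natToStr, ← List.tail_reverse]
  rw [heq]
  exact Primrec.list_tail.comp (Primrec.list_reverse.comp (primrec_bits.comp Primrec.succ))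

lemma primrec_strToNat : Primrec strToNat := by
  apply Primrec.nat_sub.comp ?_ (Primrec.const 1)
  exact Primrec.list_foldl Primrec.id (Primrec.const 1)
    ((Primrec.nat_add.comp
      (Primrec.nat_mul.comp (Primrec.const 2) (Primrec.fst.comp Primrec.snd))
      (Primrec.cond (Primrec.snd.comp Primrec.snd) (Primrec.const 1) (Primrec.const 0))).to₂)

end S16
namespace S16
open Nat.Partrec (Code)
open Nat.Partrec.Code Encodable

lemma primrec_find? {α β : Type} [Primcodable α] [Primcodable β]
    {f : α → List β} {p : α → β → Bool} (hf : Primrec f) (hp : Primrec₂ p) :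
    Primrec fun a => (f a).find? (p a) := by
  have heq : ∀ (pr : β → Bool) (l : List β),
      l.foldr (fun x acc => bif pr x then some x else acc) none = l.find? pr := by
    intro pr l
    induction l with
    | nil => rfl
    | cons b t ih =>
      by_cases hb : pr b
      · simp [hb, List.find?_cons_of_pos hb]
      · have hb' : pr b = false := by simpa using hb
        simp [List.find?_cons_of_neg hb, hb', ih]
  have hmain : Primrec fun a => (f a).foldr (fun b s => bif p a b then some b else s) none :=
    Primrec.list_foldr hf (Primrec.const none)
      ((Primrec.cond (hp.comp Primrec.fst (Primrec.fst.comp Primrec.snd))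
        (Primrec.option_some.comp (Primrec.fst.comp Primrec.snd))
        (Primrec.snd.comp Primrec.snd)).to₂)
  exact hmain.of_eq fun a => heq (p a) (f a)

lemma primrec_replicate (b : Bool) : Primrec fun n => List.replicate n b := by
  have heq : (fun n => List.replicate n b) = Nat.rec [] (fun _ ih => b :: ih) := by
    funext n
    induction n with
    | zero => rfl
    | succ n ih => rw [List.replicate_succ, ih]
  rw [heq]
  exact Primrec.nat_rec₁ [] ((Primrec.list_cons.comp (Primrec.const b) Primrec.snd).to₂)

lemma primrec_take : Primrec₂ fun (l : List Bool) (n : ℕ) => l.take n := by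
  have heq : ∀ (l : List Bool) (n : ℕ),
      l.take n = (List.range (min n l.length)).map (fun i => l.getD i false) := by
    intro l n
    apply List.ext_getElem
    · simp
    · intro i h1 h2
      have hi : i < l.length := by
        simp only [List.length_take] at h1; omega
      simp only [List.getElem_take, List.getElem_map, List.getElem_range,
        List.getD_eq_getElem _ _ hi]
  have hm : Primrec fun a : List Bool × ℕ =>
      (List.range (min a.2 a.1.length)).map (fun i => a.1.getD i false) :=
    Primrec.list_map
      (Primrec.list_range.comp (Primrec.nat_min.comp Primrec.snd
        (Primrec.list_length.comp Primrec.fst)))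
      (((Primrec.list_getD false).comp (Primrec.fst.comp Primrec.fst) Primrec.snd).to₂)
  exact hm.of_eq fun a => (heq a.1 a.2).symm

lemma primrec_drop : Primrec₂ fun (l : List Bool) (n : ℕ) => l.drop n := by
  have heq : ∀ (l : List Bool) (n : ℕ),
      l.drop n = (List.range (l.length - n)).map (fun i => l.getD (n + i) false) := by
    intro l n
    apply List.ext_getElem
    · simp
    · intro i h1 h2
      have hi : n + i < l.length := by
        simp only [List.length_drop] at h1; omega
      simp only [List.getElem_drop, List.getElem_map, List.getElem_range,
        List.getD_eq_getElem _ _ hi]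
  have hm : Primrec fun a : List Bool × ℕ =>
      (List.range (a.1.length - a.2)).map (fun i => a.1.getD (a.2 + i) false) :=
    Primrec.list_map
      (Primrec.list_range.comp (Primrec.nat_sub.comp
        (Primrec.list_length.comp Primrec.fst) Primrec.snd))
      (((Primrec.list_getD false).comp (Primrec.fst.comp Primrec.fst)
        (Primrec.nat_add.comp (Primrec.snd.comp Primrec.fst) Primrec.snd)).to₂)
  exact hm.of_eq fun a => (heq a.1 a.2).symm

lemma primrec_allOfLength : Primrec allOfLength := by
  have heq : allOfLength =
      Nat.rec [([] : List Bool)] (fun _ ih => ih.flatMap fun l => [false :: l, true :: l]) := by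
    funext n
    induction n with
    | zero => rfl
    | succ n ih =>
      show (allOfLength n).flatMap (fun l => [false :: l, true :: l]) = _
      rw [ih]
  rw [heq]
  have hstep : Primrec fun a : ℕ × List (List Bool) =>
      a.2.flatMap fun l => [false :: l, true :: l] :=
    Primrec.list_flatMap Primrec.snd
      ((Primrec.list_cons.comp
        (Primrec.list_cons.comp (Primrec.const false) Primrec.snd)
        (Primrec.list_cons.comp
          (Primrec.list_cons.comp (Primrec.const true) Primrec.snd)
          (Primrec.const []))).to₂)
  exact Primrec.nat_rec₁ [([] : List Bool)] hstep.to₂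

lemma primrec_allUpTo : Primrec allUpTo :=
  Primrec.list_flatMap (Primrec.list_range.comp Primrec.succ)
    (primrec_allOfLength.comp Primrec.snd).to₂

lemma primrec_evalnC (c : Code) : Primrec₂ fun (k x : ℕ) => evaln k c x :=
  primrec_evaln.comp (Primrec.pair (Primrec.pair Primrec.fst (Primrec.const c)) Primrec.snd)

/-! ### The searched runtime function -/

def rt (c : Code) (k : ℕ) (r : List Bool) : ℕ :=
  (((List.range (k + 1)).find? fun t => (evaln t c (encode r)).isSome)).getD 0

lemma rt_eq_runtime {c : Code} {k : ℕ} {r : List Bool}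
    (h : (evaln k c (encode r)).isSome) : rt c k r = runtime c r := by
  have hex : (((List.range (k + 1)).find? fun t => (evaln t c (encode r)).isSome)).isSome :=
    List.find?_isSome.2 ⟨k, List.mem_range.2 (Nat.lt_succ_self k), h⟩
  obtain ⟨j, hj⟩ := Option.isSome_iff_exists.1 hex
  rw [rt, hj, Option.getD_some]
  exact find?_range_sInf hj

lemma primrec_rt (c : Code) : Primrec₂ (rt c) := by
  have hfind : Primrec fun a : ℕ × List Bool =>
      (List.range (a.1 + 1)).find? fun t => (evaln t c (encode a.2)).isSome :=
    primrec_find? (Primrec.list_range.comp (Primrec.succ.comp Primrec.fst))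
      ((Primrec.option_isSome.comp ((primrec_evalnC c).comp Primrec.snd
        (Primrec.encode.comp (Primrec.snd.comp Primrec.fst)))).to₂)
  exact (Primrec.option_getD.comp hfind (Primrec.const 0)).to₂

def maxRt (c : Code) (t n : ℕ) : ℕ :=
  (allUpTo n).foldr
    (fun r acc => max (bif (evaln t c (encode r)).isSome then rt c t r else 0) acc) 0

lemma primrec_maxRt (c : Code) : Primrec₂ (maxRt c) := by
  have hstep : Primrec fun a : (ℕ × ℕ) × List Bool × ℕ =>
      max (bif (evaln a.1.1 c (encode a.2.1)).isSome then rt c a.1.1 a.2.1 else 0) a.2.2 :=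
    Primrec.nat_max.comp
      (Primrec.cond
        (Primrec.option_isSome.comp ((primrec_evalnC c).comp (Primrec.fst.comp Primrec.fst)
          (Primrec.encode.comp (Primrec.fst.comp Primrec.snd))))
        ((primrec_rt c).comp (Primrec.fst.comp Primrec.fst) (Primrec.fst.comp Primrec.snd))
        (Primrec.const 0))
      (Primrec.snd.comp Primrec.snd)
  exact Primrec.list_foldr (primrec_allUpTo.comp Primrec.snd) (Primrec.const 0) hstep.to₂

/-! ### the padded computer's partial function -/

def suffixOk (l : List Bool) : Bool := decide (l = List.replicate (l.length - 1) false ++ [true])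

lemma primrec_suffixOk : Primrec suffixOk :=
  (Primrec.eq.comp Primrec.id
    (Primrec.list_append.comp
      ((primrec_replicate false).comp (Primrec.nat_sub.comp Primrec.list_length
        (Primrec.const 1)))
      (Primrec.const [true]))).decide

def outA (c : Code) (q : List Bool) (t : ℕ) : List Bool :=
  natToStr (Nat.pair (maxRt c t (q.length - 1)) (q.length - 1))

def hA (c : Code) (q : List Bool) (k : ℕ) : Option (List Bool) :=
  ((List.range (q.length + 1)).find? fun i =>
      suffixOk (q.drop i) && (evaln k c (encode (q.take i))).isSome).map fun i =>
    outA c q (rt c k (q.take i))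

lemma primrec_hA (c : Code) : Primrec₂ (hA c) := by
  have hlen1 : Primrec fun a : (List Bool × ℕ) × ℕ => a.1.1.length - 1 :=
    Primrec.nat_sub.comp (Primrec.list_length.comp (Primrec.fst.comp Primrec.fst))
      (Primrec.const 1)
  have hfind : Primrec fun a : List Bool × ℕ =>
      (List.range (a.1.length + 1)).find? fun i =>
        suffixOk (a.1.drop i) && (evaln a.2 c (encode (a.1.take i))).isSome := by
    apply primrec_find?
      (Primrec.list_range.comp (Primrec.succ.comp (Primrec.list_length.comp Primrec.fst)))
    have h1 : Primrec fun a : (List Bool × ℕ) × ℕ => suffixOk (a.1.1.drop a.2) :=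
      primrec_suffixOk.comp (primrec_drop.comp (Primrec.fst.comp Primrec.fst) Primrec.snd)
    have h2 : Primrec fun a : (List Bool × ℕ) × ℕ =>
        (evaln a.1.2 c (encode (a.1.1.take a.2))).isSome :=
      Primrec.option_isSome.comp ((primrec_evalnC c).comp (Primrec.snd.comp Primrec.fst)
        (Primrec.encode.comp (primrec_take.comp (Primrec.fst.comp Primrec.fst) Primrec.snd)))
    exact ((Primrec.dom_bool₂ (· && ·)).comp h1 h2).to₂
  have hout : Primrec fun x : (List Bool × ℕ) × ℕ =>
      outA c x.1.1 (rt c x.1.2 (x.1.1.take x.2)) :=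
    primrec_natToStr.comp (Primrec₂.natPair.comp
      ((primrec_maxRt c).comp
        ((primrec_rt c).comp (Primrec.snd.comp Primrec.fst)
          (primrec_take.comp (Primrec.fst.comp Primrec.fst) Primrec.snd))
        hlen1) hlen1)
  exact Primrec.option_map hfind hout.to₂

/-! ### the diagonal function -/

def lenOut (c : Code) (t : ℕ) (r : List Bool) : ℕ :=
  (((evaln t c (encode r)).bind fun y => (decode y : Option (List Bool))).getD []).length

def diag (c : Code) (t : ℕ) : List Bool :=
  List.replicate ((allUpTo t).foldr (fun r acc => max (lenOut c t r) acc) 0 + 1) true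

def gB (c : Code) (s : List Bool) : List Bool := diag c (strToNat s)

lemma primrec_lenOut (c : Code) : Primrec₂ (lenOut c) := by
  have hm : Primrec fun a : ℕ × List Bool =>
      (((evaln a.1 c (encode a.2)).bind fun y =>
        (decode y : Option (List Bool))).getD []).length :=
    Primrec.list_length.comp (Primrec.option_getD.comp
      (Primrec.option_bind
        ((primrec_evalnC c).comp Primrec.fst (Primrec.encode.comp Primrec.snd))
        (Primrec.decode.comp Primrec.snd).to₂)
      (Primrec.const []))
  exact hm.to₂

lemma primrec_diag (c : Code) : Primrec (diag c) := by
  have hstep : Primrec fun a : ℕ × List Bool × ℕ => max (lenOut c a.1 a.2.1) a.2.2 :=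
    Primrec.nat_max.comp
      ((primrec_lenOut c).comp Primrec.fst (Primrec.fst.comp Primrec.snd))
      (Primrec.snd.comp Primrec.snd)
  have hfold : Primrec fun t : ℕ =>
      (allUpTo t).foldr (fun r acc => max (lenOut c t r) acc) 0 :=
    Primrec.list_foldr primrec_allUpTo (Primrec.const 0) hstep.to₂
  exact (primrec_replicate true).comp (Primrec.succ.comp hfold)

lemma primrec_gB (c : Code) : Primrec (gB c) := (primrec_diag c).comp primrec_strToNat

def projC (s : List Bool) : List Bool := natToStr (Nat.unpair (strToNat s)).1

lemma primrec_projC : Primrec projC :=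
  primrec_natToStr.comp (Primrec.fst.comp (Primrec.unpair.comp primrec_strToNat))

lemma projC_pair (a b : ℕ) : projC (natToStr (Nat.pair a b)) = natToStr a := by
  rw [projC, strToNat_natToStr, Nat.unpair_pair]

lemma gB_natToStr (c : Code) (t : ℕ) : gB c (natToStr t) = diag c t := by
  rw [gB, strToNat_natToStr]

end S16
namespace S16
open Nat.Partrec (Code)
open Nat.Partrec.Code Encodable

lemma take_dom_unique {V : Computer} {q : List Bool} {i i' : ℕ}
    (hi : i ≤ q.length) (hi' : i' ≤ q.length)
    (d1 : (V.f (q.take i)).Dom) (d2 : (V.f (q.take i')).Dom) : i = i' := by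
  wlog hle : i ≤ i' generalizing i i'
  · exact (this hi' hi d2 d1 (le_of_not_ge hle)).symm
  have hpre : q.take i <+: q.take i' := by
    have h1 : q.take i = (q.take i').take i := by
      rw [List.take_take]
      congr 1
      omega
    rw [h1]
    exact List.take_prefix _ _
  have heq := V.prefixFree _ _ d1 d2 hpre
  have h1 : (q.take i).length = i := by rw [List.length_take]; omega
  have h2 : (q.take i').length = i' := by rw [List.length_take]; omega
  rw [← h1, ← h2, heq]

lemma hA_valid {c : Code} {q a : List Bool} {k : ℕ} (h : hA c q k = some a) :
    ∃ i, i ≤ q.length ∧ suffixOk (q.drop i) = true ∧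
      (evaln k c (encode (q.take i))).isSome = true ∧
      a = outA c q (rt c k (q.take i)) := by
  obtain ⟨i, hfind, rfl⟩ := Option.map_eq_some_iff.1 h
  have hp := List.find?_some hfind
  rw [Bool.and_eq_true] at hp
  have hmem := List.mem_of_find?_eq_some hfind
  exact ⟨i, Nat.lt_succ_iff.1 (List.mem_range.1 hmem), hp.1, hp.2, rfl⟩

lemma hA_mono {V : Computer} {c : Code} (hc : ComputesVia c V) {q a : List Bool}
    {m k : ℕ} (hmk : m ≤ k) (h : hA c q m = some a) : hA c q k = some a := by
  obtain ⟨i, hi, hsuf, hev, rfl⟩ := hA_valid h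
  have hevk : (evaln k c (encode (q.take i))).isSome := evaln_isSome_mono hmk hev
  have hex : ((List.range (q.length + 1)).find? fun j =>
      suffixOk (q.drop j) && (evaln k c (encode (q.take j))).isSome).isSome :=
    List.find?_isSome.2 ⟨i, List.mem_range.2 (by omega),
      by rw [Bool.and_eq_true]; exact ⟨hsuf, hevk⟩⟩
  obtain ⟨j, hj⟩ := Option.isSome_iff_exists.1 hex
  have hjp := List.find?_some hj
  rw [Bool.and_eq_true] at hjp
  have hjr := List.mem_of_find?_eq_some hj
  have hji : j = i := take_dom_unique (Nat.lt_succ_iff.1 (List.mem_range.1 hjr)) hi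
    (dom_of_evaln hc hjp.2) (dom_of_evaln hc hevk)
  subst hji
  rw [hA, hj, Option.map_some]
  rw [rt_eq_runtime hevk, rt_eq_runtime hev]

/-- The padding computer used for the upper bound on `H(T_n, n)`. -/
def compA (V : Computer) (c : Code) (hc : ComputesVia c V) : Computer where
  f := fun q => Nat.rfindOpt (hA c q)
  partrec := Partrec.rfindOpt (primrec_hA c).to_comp
  prefixFree := by
    intro p q dp dq hpq
    obtain ⟨k, a, ha⟩ := Nat.rfindOpt_dom.1 dp
    obtain ⟨k', a', ha'⟩ := Nat.rfindOpt_dom.1 dq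
    obtain ⟨i, hi, hsuf, hev, -⟩ := hA_valid (Option.mem_def.1 ha)
    obtain ⟨i', hi', hsuf', hev', -⟩ := hA_valid (Option.mem_def.1 ha')
    have d1 : (V.f (p.take i)).Dom := dom_of_evaln hc hev
    have d2 : (V.f (q.take i')).Dom := dom_of_evaln hc hev'
    have hp1 : p.take i <+: q := (List.take_prefix i p).trans hpq
    have heq : p.take i = q.take i' := by
      rcases List.prefix_or_prefix_of_prefix hp1 (List.take_prefix i' q) with h | h
      · exact V.prefixFree _ _ d1 d2 h
      · exact (V.prefixFree _ _ d2 d1 h).symm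
    have hr : p.drop i = List.replicate ((p.drop i).length - 1) false ++ [true] :=
      of_decide_eq_true hsuf
    have hr' : q.drop i' = List.replicate ((q.drop i').length - 1) false ++ [true] :=
      of_decide_eq_true hsuf'
    set A := (p.drop i).length - 1 with hA1
    set B := (q.drop i').length - 1 with hB1
    have hdecomp : p = p.take i ++ (List.replicate A false ++ [true]) := by
      rw [← hr, List.take_append_drop]
    have hdecomp' : q = p.take i ++ (List.replicate B false ++ [true]) := by
      rw [heq, ← hr', List.take_append_drop]
    rw [hdecomp, hdecomp'] at hpq
    have hpq2 : List.replicate A false ++ [true] <+: List.replicate B false ++ [true] :=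
      (List.prefix_append_right_inj _).1 hpq
    have hlen : A + 1 ≤ B + 1 := by
      have := hpq2.length_le
      simpa using this
    have hAB : A = B := by
      by_contra hne
      have hAB : A < B := by omega
      have hget := hpq2.getElem (i := A) (by simp)
      have h1 : (List.replicate A false ++ [true])[A]'(by simp) = true := by
        rw [List.getElem_append_right (by simp)]
        simp
      have h2 : (List.replicate B false ++ [true])[A]'(by simp; omega) = false := by
        rw [List.getElem_append_left (by simp; omega)]
        simp
      rw [h1, h2] at hget
      cases hget
    rw [hdecomp, hdecomp', hAB]

lemma maxRt_eq {V : Computer} {c : Code} (hc : ComputesVia c V) {n : ℕ}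
    (hp : ∃ p : List Bool, (V.f p).Dom ∧ p.length ≤ n) :
    maxRt c (maxTime c V n) n = maxTime c V n := by
  obtain ⟨p, hd, hl, hrt⟩ := exists_maxTime hp
  apply le_antisymm
  · apply foldr_max_le
    intro r hr
    by_cases hs : (evaln (maxTime c V n) c (encode r)).isSome
    · rw [hs, cond_true, rt_eq_runtime hs]
      exact runtime_le_maxTime (dom_of_evaln hc hs) (mem_allUpTo.1 hr)
    · rw [Bool.not_eq_true] at hs
      rw [hs, cond_false]
      exact Nat.zero_le _
  · have hmem : p ∈ allUpTo n := mem_allUpTo.2 hl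
    have hev : (evaln (maxTime c V n) c (encode p)).isSome :=
      evaln_isSome_of_runtime_le hc hd (by rw [hrt])
    have hle := le_foldr_max
      (w := fun r => bif (evaln (maxTime c V n) c (encode r)).isSome
        then rt c (maxTime c V n) r else 0) hmem
    simp only [hev, cond_true, rt_eq_runtime hev, hrt] at hle
    exact hle

lemma compA_eval {V : Computer} {c : Code} (hc : ComputesVia c V) {n : ℕ}
    (hp : ∃ p : List Bool, (V.f p).Dom ∧ p.length ≤ n) :
    ∃ q : List Bool,
      (compA V c hc).f q = Part.some (natToStr (Nat.pair (maxTime c V n) n)) ∧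
      q.length = n + 1 := by
  obtain ⟨p, hd, hl, hrt⟩ := exists_maxTime hp
  set q : List Bool := p ++ (List.replicate (n - p.length) false ++ [true]) with hqdef
  have hql : q.length = n + 1 := by
    simp only [hqdef, List.length_append, List.length_replicate, List.length_cons,
      List.length_nil]
    omega
  refine ⟨q, ?_, hql⟩
  have htake : q.take p.length = p := List.take_left
  have hdrop : q.drop p.length = List.replicate (n - p.length) false ++ [true] :=
    List.drop_left
  have hev : (evaln (runtime c p) c (encode p)).isSome := by
    rw [evaln_runtime hc hd]; rfl
  have hpred : (suffixOk (q.drop p.length) &&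
      (evaln (runtime c p) c (encode (q.take p.length))).isSome) = true := by
    rw [htake, hdrop, Bool.and_eq_true]
    refine ⟨?_, hev⟩
    apply decide_eq_true
    simp
  have hex : ((List.range (q.length + 1)).find? fun i =>
      suffixOk (q.drop i) && (evaln (runtime c p) c (encode (q.take i))).isSome).isSome :=
    List.find?_isSome.2 ⟨p.length, List.mem_range.2 (by rw [hql]; omega), hpred⟩
  obtain ⟨j, hj⟩ := Option.isSome_iff_exists.1 hex
  have hjp := List.find?_some hj
  rw [Bool.and_eq_true] at hjp
  have hjr := List.mem_of_find?_eq_some hj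
  have hji : j = p.length := take_dom_unique (Nat.lt_succ_iff.1 (List.mem_range.1 hjr))
    (by rw [hql]; omega) (dom_of_evaln hc hjp.2) (by rw [htake]; exact hd)
  subst hji
  have hval : hA c q (runtime c p) = some (natToStr (Nat.pair (maxTime c V n) n)) := by
    rw [hA, hj, Option.map_some]
    congr 1
    rw [outA, htake, rt_eq_runtime hev]
    have hq1 : q.length - 1 = n := by omega
    rw [hq1, hrt, maxRt_eq hc hp]
  show Nat.rfindOpt (hA c q) = Part.some (natToStr (Nat.pair (maxTime c V n) n))
  rw [Part.eq_some_iff]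
  exact (Nat.rfindOpt_mono fun {a m n} hmn ham =>
    Option.mem_def.2 (hA_mono hc hmn (Option.mem_def.1 ham))).2
      ⟨runtime c p, Option.mem_def.2 hval⟩

/-! ### The diagonal computer -/

lemma diag_not_out {V : Computer} {c : Code} (hc : ComputesVia c V) {n : ℕ} {r : List Bool}
    (hd : (V.f r).Dom) (hl : r.length ≤ n) :
    ¬ V.f r = Part.some (diag c (maxTime c V n)) := by
  intro hout
  set T := maxTime c V n with hT
  have hrt : runtime c r ≤ T := runtime_le_maxTime hd hl
  have hget : (V.f r).get hd = diag c T := by simp [hout]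
  have hev : evaln T c (encode r) = some (encode (diag c T)) := by
    have h1 := evaln_runtime hc hd
    rw [hget] at h1
    exact Option.mem_def.1 (evaln_mono hrt (Option.mem_def.2 h1))
  have hbound : encode r < T := evaln_bound (Option.mem_def.2 hev)
  have hmem : r ∈ allUpTo T :=
    mem_allUpTo.2 (le_trans (length_le_encode r) (le_of_lt hbound))
  have hlen : lenOut c T r = (diag c T).length := by
    rw [lenOut, hev]
    simp [encodek]
  have h2 := le_foldr_max (w := lenOut c T) hmem
  rw [hlen] at h2
  have h3 : (diag c T).length =
      (allUpTo T).foldr (fun r acc => max (lenOut c T r) acc) 0 + 1 := by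
    rw [diag, List.length_replicate]
  omega

lemma HV_diag {V : Computer} {c : Code} (hc : ComputesVia c V) (n : ℕ) :
    (n : ℕ∞) + 1 ≤ V.H (diag c (maxTime c V n)) := by
  apply le_sInf
  rintro x ⟨p, hp, rfl⟩
  by_cases hl : p.length ≤ n
  · exact absurd hp (diag_not_out hc (by rw [hp]; trivial) hl)
  · push_neg at hl
    have : ((n + 1 : ℕ) : ℕ∞) ≤ (p.length : ℕ∞) := by exact_mod_cast hl
    calc (n : ℕ∞) + 1 = ((n + 1 : ℕ) : ℕ∞) := by push_cast; ring
      _ ≤ (p.length : ℕ∞) := this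

end S16
namespace S16
open Nat.Partrec (Code)

/-- The computer printing the diagonal string from a program for `T`. -/
def compB (U : Computer) (c : Code) : Computer := mapComp U (gB c) (primrec_gB c).to_comp

/-- The computer projecting a pair to its first component. -/
def compC (U : Computer) : Computer := mapComp U projC primrec_projC.to_comp

end S16

theorem stmt_16 (U : Computer) (hU : U.IsOptimal) (V : Computer) (hV : V.IsOptimal)
    (c : Nat.Partrec.Code) (hc : ComputesVia c V) :
    ∃ d : ℕ, ∀ n : ℕ, minLen V ≤ n →
      ((n : ℕ∞) ≤ HPairN U (maxTime c V n) n + d ∧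
        HPairN U (maxTime c V n) n ≤ (n : ℕ∞) + d) ∧
      ((n : ℕ∞) ≤ HN U (maxTime c V n) + d ∧
        HN U (maxTime c V n) ≤ (n : ℕ∞) + d) := by
  classical
  obtain ⟨c1, hc1⟩ := S16.opt_H hV U
  obtain ⟨dA, hdA⟩ := S16.opt_H hU (S16.compA V c hc)
  obtain ⟨dB, hdB⟩ := S16.opt_H hU (S16.compB U c)
  obtain ⟨dC, hdC⟩ := S16.opt_H hU (S16.compC U)
  have mono : ∀ (x : ℕ∞) (a b : ℕ), a ≤ b → x + (a : ℕ∞) ≤ x + (b : ℕ∞) :=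
    fun x a b h => add_le_add_right (by exact_mod_cast h : (a : ℕ∞) ≤ b) x
  refine ⟨dA + dB + dC + c1 + 1, fun n hn => ?_⟩
  have hex : ∃ p : List Bool, (V.f p).Dom ∧ p.length ≤ n := by
    obtain ⟨p0, hp0⟩ := S16.dom_nonempty hV
    have hne : {k : ℕ | ∃ p : List Bool, (V.f p).Dom ∧ p.length = k}.Nonempty :=
      ⟨p0.length, p0, hp0, rfl⟩
    obtain ⟨p1, hp1, hl1⟩ := Nat.sInf_mem hne
    exact ⟨p1, hp1, by rw [hl1]; exact hn⟩
  -- tight upper bound for the pair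
  obtain ⟨q, hq, hql⟩ := S16.compA_eval hc hex
  have hupt : HPairN U (maxTime c V n) n ≤ (n : ℕ∞) + ((1 + dA : ℕ) : ℕ∞) := by
    have h1 : (S16.compA V c hc).H (natToStr (Nat.pair (maxTime c V n) n))
        ≤ ((n + 1 : ℕ) : ℕ∞) := by
      have h0 := S16.H_le hq
      rwa [hql] at h0
    calc HPairN U (maxTime c V n) n
        ≤ (S16.compA V c hc).H (natToStr (Nat.pair (maxTime c V n) n)) + dA := hdA _
      _ ≤ ((n + 1 : ℕ) : ℕ∞) + dA := add_le_add_left h1 _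
      _ = (n : ℕ∞) + ((1 + dA : ℕ) : ℕ∞) := by push_cast; ring
  -- HN in terms of HPairN
  have hNC : HN U (maxTime c V n) ≤ HPairN U (maxTime c V n) n + dC := by
    have h2 := S16.mapComp_H_le U S16.projC S16.primrec_projC.to_comp
      (natToStr (Nat.pair (maxTime c V n) n))
    rw [S16.projC_pair] at h2
    calc HN U (maxTime c V n)
        ≤ (S16.compC U).H (natToStr (maxTime c V n)) + dC := hdC _
      _ ≤ HPairN U (maxTime c V n) n + dC := add_le_add_left h2 _
  -- lower bound via the diagonal string
  have hBH : (S16.compB U c).H (S16.diag c (maxTime c V n)) ≤ HN U (maxTime c V n) := by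
    have h3 := S16.mapComp_H_le U (S16.gB c) (S16.primrec_gB c).to_comp
      (natToStr (maxTime c V n))
    rwa [S16.gB_natToStr] at h3
  have hlow : (n : ℕ∞) + 1 ≤ HN U (maxTime c V n) + ((dB + c1 : ℕ) : ℕ∞) := by
    calc (n : ℕ∞) + 1 ≤ V.H (S16.diag c (maxTime c V n)) := S16.HV_diag hc n
      _ ≤ U.H (S16.diag c (maxTime c V n)) + c1 := hc1 _
      _ ≤ ((S16.compB U c).H (S16.diag c (maxTime c V n)) + dB) + c1 :=
          add_le_add_left (hdB _) _
      _ ≤ (HN U (maxTime c V n) + dB) + c1 := add_le_add_left (add_le_add_left hBH _) _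
      _ = HN U (maxTime c V n) + ((dB + c1 : ℕ) : ℕ∞) := by push_cast; rw [add_assoc]
  refine ⟨⟨?_, ?_⟩, ?_, ?_⟩
  · calc (n : ℕ∞) ≤ (n : ℕ∞) + 1 := le_self_add
      _ ≤ HN U (maxTime c V n) + ((dB + c1 : ℕ) : ℕ∞) := hlow
      _ ≤ (HPairN U (maxTime c V n) n + dC) + ((dB + c1 : ℕ) : ℕ∞) :=
          add_le_add_left hNC _
      _ = HPairN U (maxTime c V n) n + ((dC + (dB + c1) : ℕ) : ℕ∞) := by
          push_cast; rw [add_assoc]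
      _ ≤ HPairN U (maxTime c V n) n + ((dA + dB + dC + c1 + 1 : ℕ) : ℕ∞) :=
          mono _ _ _ (by omega)
  · calc HPairN U (maxTime c V n) n ≤ (n : ℕ∞) + ((1 + dA : ℕ) : ℕ∞) := hupt
      _ ≤ (n : ℕ∞) + ((dA + dB + dC + c1 + 1 : ℕ) : ℕ∞) := mono _ _ _ (by omega)
  · calc (n : ℕ∞) ≤ (n : ℕ∞) + 1 := le_self_add
      _ ≤ HN U (maxTime c V n) + ((dB + c1 : ℕ) : ℕ∞) := hlow
      _ ≤ HN U (maxTime c V n) + ((dA + dB + dC + c1 + 1 : ℕ) : ℕ∞) :=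
          mono _ _ _ (by omega)
  · calc HN U (maxTime c V n) ≤ HPairN U (maxTime c V n) n + dC := hNC
      _ ≤ ((n : ℕ∞) + ((1 + dA : ℕ) : ℕ∞)) + dC := add_le_add_left hupt _
      _ = (n : ℕ∞) + ((1 + dA + dC : ℕ) : ℕ∞) := by push_cast; rw [add_assoc]
      _ ≤ (n : ℕ∞) + ((dA + dB + dC + c1 + 1 : ℕ) : ℕ∞) := mono _ _ _ (by omega)
end

section
/- Let V be an optimal computer and M a deterministic Turing machine computing V. There exists d ∈ ℕ such that for every p ∈ dom V there exists q ∈ dom V with |q| ≤ |p| + d and the running time of M on input q strictly exceeds the running time of M on input p. -/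
open scoped Classical ENNReal

section BusyAux

open Encodable

def leadT : List Bool → ℕ
  | [] => 0
  | a :: l => bif a then leadT l + 1 else 0

def tailF : List Bool → List Bool
  | [] => []
  | a :: l => bif a then tailF l else l

def EB : ℕ → ℕ
  | 0 => 1
  | n + 1 => EB n * EB n + 4

def strOfFin (L m : ℕ) : List Bool :=
  (List.range L).map fun i => decide (m / 2 ^ i % 2 = 1)

def strings (n : ℕ) : List (List Bool) :=
  (List.range (EB n)).filterMap fun k =>
    (Encodable.decode₂ (List Bool) k).bind fun r => if r.length ≤ n then some r else none

def outsOf (c : Nat.Partrec.Code) (t n : ℕ) : List (List Bool) :=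
  (strings n).filterMap fun r =>
    (Nat.Partrec.Code.evaln t c (Encodable.encode r)).bind fun v => Encodable.decode v

def memB (x : List Bool) : List (List Bool) → Bool
  | [] => false
  | a :: l => bif decide (a = x) then true else memB x l

def fresh (L : ℕ) (outs : List (List Bool)) : List Bool :=
  strOfFin L
    (((List.range (2 ^ L)).filterMap fun m =>
        bif memB (strOfFin L m) outs then none else some m).headI)

def busyF (c : Nat.Partrec.Code) : List Bool →. List Bool := fun s =>
  (Nat.rfind fun k => Part.some (decide (leadT s < s.length) &&
      (Nat.Partrec.Code.evaln k c (Encodable.encode (tailF s))).isSome)).map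
    fun t => fresh (EB ((tailF s).length + 2 * leadT s))
      (outsOf c t ((tailF s).length + 2 * leadT s))

theorem headI_mem (l : List ℕ) (h : l ≠ []) : l.headI ∈ l := by
  cases l with
  | nil => exact absurd rfl h
  | cons a l => simp

theorem memB_iff (x : List Bool) (l : List (List Bool)) : memB x l = true ↔ x ∈ l := by
  induction l with
  | nil => simp [memB]
  | cons a l ih =>
    by_cases h : a = x
    · simp [memB, h]
    · simp only [memB, h, decide_false, cond_false, ih, List.mem_cons]
      exact ⟨fun h2 => Or.inr h2, fun h2 => h2.resolve_left (fun hxa => absurd hxa.symm h)⟩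

theorem leadT_rep (D : ℕ) (p : List Bool) :
    leadT (List.replicate D true ++ false :: p) = D := by
  induction D with
  | zero => simp [leadT]
  | succ D ih => simp [List.replicate_succ, leadT, ih]

theorem tailF_rep (D : ℕ) (p : List Bool) :
    tailF (List.replicate D true ++ false :: p) = p := by
  induction D with
  | zero => simp [tailF]
  | succ D ih => simp [List.replicate_succ, tailF, ih]

theorem structure_of : ∀ s : List Bool, leadT s < s.length →
    s = List.replicate (leadT s) true ++ false :: tailF s := by
  intro s
  induction s with
  | nil => intro h; simp at h
  | cons a l ih =>
    cases a with
    | false => intro _; simp [leadT, tailF]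
    | true =>
      intro h
      simp only [leadT, tailF, cond_true, List.length_cons] at *
      have := ih (by omega)
      rw [List.replicate_succ, List.cons_append]
      exact congrArg _ this

theorem prefix_structure : ∀ (D D' : ℕ) (p p' : List Bool),
    (List.replicate D true ++ false :: p) <+: (List.replicate D' true ++ false :: p') →
    D = D' ∧ p <+: p' := by
  intro D
  induction D with
  | zero =>
    intro D' p p' h
    cases D' with
    | zero => simpa [List.cons_prefix_cons] using h
    | succ D' =>
      rw [List.replicate_succ] at h
      simp [List.cons_prefix_cons] at h
  | succ D ih =>
    intro D' p p' h
    cases D' with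
    | zero =>
      rw [List.replicate_succ] at h
      simp [List.cons_prefix_cons] at h
    | succ D' =>
      rw [List.replicate_succ, List.replicate_succ] at h
      simp only [List.cons_append, List.cons_prefix_cons, true_and] at h
      obtain ⟨hD, hp⟩ := ih D' p p' h
      exact ⟨by omega, hp⟩

theorem EB_pos (n : ℕ) : 0 < EB n := by
  cases n <;> simp [EB]

theorem EB_mono : Monotone EB := by
  apply monotone_nat_of_le_succ
  intro n
  have := EB_pos n
  simp only [EB]
  nlinarith

theorem encode_lt_EB : ∀ l : List Bool, encode l < EB l.length := by
  intro l
  induction l with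
  | nil => simp [EB, Encodable.encode_list_nil]
  | cons a l ih =>
    have ha : encode a ≤ 1 := by cases a <;> simp
    rw [Encodable.encode_list_cons]
    simp only [List.length_cons, EB]
    have hp : Nat.pair (encode a) (encode l) < EB l.length * EB l.length + 3 := by
      have h1 := EB_pos l.length
      rw [Nat.pair]
      split_ifs <;> nlinarith
    omega

theorem mem_strings {l : List Bool} {n : ℕ} (h : l.length ≤ n) : l ∈ strings n := by
  rw [strings, List.mem_filterMap]
  refine ⟨encode l, List.mem_range.2 ?_, ?_⟩
  · exact lt_of_lt_of_le (encode_lt_EB l) (EB_mono h)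
  · rw [Encodable.decode₂_encode]
    simp [h]

theorem length_outsOf (c : Nat.Partrec.Code) (t n : ℕ) : (outsOf c t n).length ≤ EB n := by
  calc (outsOf c t n).length ≤ (strings n).length := List.length_filterMap_le _ _
    _ ≤ (List.range (EB n)).length := List.length_filterMap_le _ _
    _ = EB n := List.length_range

theorem mem_outsOf {c : Nat.Partrec.Code} {t n : ℕ} {q x : List Bool} (hq : q.length ≤ n)
    (he : Nat.Partrec.Code.evaln t c (encode q) = some (encode x)) : x ∈ outsOf c t n := by
  rw [outsOf, List.mem_filterMap]
  exact ⟨q, mem_strings hq, by rw [he]; simp [Encodable.encodek]⟩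

theorem strOfFin_inj {L m m' : ℕ} (hm : m < 2 ^ L) (hm' : m' < 2 ^ L)
    (h : strOfFin L m = strOfFin L m') : m = m' := by
  apply Nat.eq_of_testBit_eq
  intro i
  by_cases hi : i < L
  · have := congrArg (fun l => l[i]?) h
    simp only [strOfFin, List.getElem?_map, List.getElem?_range hi] at this
    simp only [Option.map_some] at this
    have h2 := Option.some.inj this
    rw [Nat.testBit_eq_decide_div_mod_eq, Nat.testBit_eq_decide_div_mod_eq]
    exact h2
  · push_neg at hi
    have h2 : (2:ℕ) ^ L ≤ 2 ^ i := Nat.pow_le_pow_right (by norm_num) hi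
    rw [Nat.testBit_eq_false_of_lt (lt_of_lt_of_le hm h2),
      Nat.testBit_eq_false_of_lt (lt_of_lt_of_le hm' h2)]

theorem fresh_spec {L : ℕ} {outs : List (List Bool)} (h : outs.length < 2 ^ L) :
    fresh L outs ∉ outs := by
  set F : ℕ → Option ℕ := fun m => bif memB (strOfFin L m) outs then none else some m with hF
  set l := (List.range (2 ^ L)).filterMap F with hl
  have hne : l ≠ [] := by
    intro hnil
    -- then every m < 2^L has strOfFin L m ∈ outs
    have hall : ∀ m < 2 ^ L, strOfFin L m ∈ outs := by
      intro m hm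
      by_contra hmem
      have : F m = some m := by
        simp only [hF]
        rw [(Bool.cond_eq_if)]
        rw [if_neg]
        intro hb
        exact hmem ((memB_iff _ _).1 hb)
      have : m ∈ l := by
        rw [hl, List.mem_filterMap]
        exact ⟨m, List.mem_range.2 hm, this⟩
      rw [hnil] at this
      simp at this
    -- pigeonhole
    have hsub : (Finset.range (2 ^ L)).image (strOfFin L) ⊆ outs.toFinset := by
      intro x hx
      rw [Finset.mem_image] at hx
      obtain ⟨m, hm, rfl⟩ := hx
      exact List.mem_toFinset.2 (hall m (Finset.mem_range.1 hm))
    have hcard : ((Finset.range (2 ^ L)).image (strOfFin L)).card = 2 ^ L := by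
      rw [Finset.card_image_of_injOn, Finset.card_range]
      intro a ha b hb hab
      exact strOfFin_inj (Finset.mem_range.1 ha) (Finset.mem_range.1 hb) hab
    have := Finset.card_le_card hsub
    have h2 := outs.toFinset_card_le
    omega
  have hmem : l.headI ∈ l := headI_mem l hne
  rw [hl, List.mem_filterMap] at hmem
  obtain ⟨m, _, hFm⟩ := hmem
  have : memB (strOfFin L m) outs = false ∧ m = l.headI := by
    revert hFm
    simp only [hF]
    cases hb : memB (strOfFin L m) outs <;> simp <;> exact id
  obtain ⟨hmB, rfl⟩ := this
  rw [fresh]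
  intro hmem2
  rw [← memB_iff] at hmem2
  rw [hl] at hmB
  rw [hmem2] at hmB
  exact absurd hmB (by simp)


theorem primrec_leadT : Primrec leadT :=
  (Primrec.list_rec Primrec.id (Primrec.const 0)
    ((Primrec.cond (Primrec.fst.comp Primrec.snd)
      (Primrec.succ.comp (Primrec.snd.comp (Primrec.snd.comp Primrec.snd)))
      (Primrec.const 0)).to₂)).of_eq fun l => by
    induction l with
    | nil => rfl
    | cons a l ih => cases a <;> simp_all [leadT]

theorem primrec_tailF : Primrec tailF :=
  (Primrec.list_rec Primrec.id (Primrec.const ([] : List Bool))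
    ((Primrec.cond (Primrec.fst.comp Primrec.snd)
      (Primrec.snd.comp (Primrec.snd.comp Primrec.snd))
      (Primrec.fst.comp (Primrec.snd.comp Primrec.snd))).to₂)).of_eq fun l => by
    induction l with
    | nil => rfl
    | cons a l ih => cases a <;> simp_all [tailF]

theorem primrec_EB : Primrec EB :=
  (Primrec.nat_rec' Primrec.id (Primrec.const 1)
    ((Primrec.nat_add.comp
        (Primrec.nat_mul.comp (Primrec.snd.comp Primrec.snd) (Primrec.snd.comp Primrec.snd))
        (Primrec.const 4)).to₂)).of_eq fun n => by
    induction n with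
    | zero => rfl
    | succ n ih => simp_all [EB]

theorem primrec_pow : Primrec₂ (fun a b : ℕ => a ^ b) := Primrec₂.unpaired'.1 Nat.Primrec.pow

theorem primrec_strOfFin : Primrec (fun p : ℕ × ℕ => strOfFin p.1 p.2) :=
  Primrec.list_map (Primrec.list_range.comp Primrec.fst)
    ((Primrec.eq.comp
        (Primrec.nat_mod.comp
          (Primrec.nat_div.comp (Primrec.snd.comp Primrec.fst)
            (primrec_pow.comp (Primrec.const 2) Primrec.snd))
          (Primrec.const 2))
        (Primrec.const 1)).decide.to₂)

theorem primrec_strings : Primrec strings :=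
  Primrec.listFilterMap (Primrec.list_range.comp primrec_EB)
    ((Primrec.option_bind (Primrec.decode₂.comp Primrec.snd)
      ((Primrec.ite (Primrec.nat_le.comp (Primrec.list_length.comp Primrec.snd)
          (Primrec.fst.comp Primrec.fst))
        (Primrec.option_some.comp Primrec.snd)
        (Primrec.const none)).to₂)).to₂)

theorem primrec_outsOf (c : Nat.Partrec.Code) :
    Primrec (fun p : ℕ × ℕ => outsOf c p.1 p.2) :=
  Primrec.listFilterMap (primrec_strings.comp Primrec.snd)
    ((Primrec.option_bind
        (Nat.Partrec.Code.primrec_evaln.comp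
          ((Primrec.pair (Primrec.fst.comp Primrec.fst) (Primrec.const c)).pair
            (Primrec.encode.comp Primrec.snd)))
        ((Primrec.decode.comp Primrec.snd).to₂)).to₂)

theorem primrec_memB : Primrec (fun p : List Bool × List (List Bool) => memB p.1 p.2) :=
  (Primrec.list_rec Primrec.snd (Primrec.const false)
    ((Primrec.cond (Primrec.eq.comp (Primrec.fst.comp Primrec.snd) (Primrec.fst.comp Primrec.fst)).decide
      (Primrec.const true)
      (Primrec.snd.comp (Primrec.snd.comp Primrec.snd))).to₂)).of_eq fun p => by
    obtain ⟨x, l⟩ := p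
    induction l with
    | nil => rfl
    | cons a l ih => by_cases h : a = x <;> simp_all [memB, h]

theorem primrec_fresh : Primrec (fun p : ℕ × List (List Bool) => fresh p.1 p.2) :=
  primrec_strOfFin.comp <| Primrec.fst.pair <|
    Primrec.list_headI.comp <|
      Primrec.listFilterMap
        (Primrec.list_range.comp (primrec_pow.comp (Primrec.const 2) Primrec.fst))
        ((Primrec.cond
            (primrec_memB.comp
              ((primrec_strOfFin.comp (Primrec.pair (Primrec.fst.comp Primrec.fst)
                Primrec.snd)).pair (Primrec.snd.comp Primrec.fst)))
            (Primrec.const none)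
            (Primrec.option_some.comp Primrec.snd)).to₂)

set_option maxHeartbeats 1000000 in
theorem busyF_partrec (c : Nat.Partrec.Code) : Partrec (busyF c) := by
  have hN : Primrec (fun s : List Bool => (tailF s).length + 2 * leadT s) :=
    Primrec.nat_add.comp (Primrec.list_length.comp primrec_tailF)
      (Primrec.nat_mul.comp (Primrec.const 2) primrec_leadT)
  have hB : Computable₂ (fun (s : List Bool) (k : ℕ) => decide (leadT s < s.length) &&
      (Nat.Partrec.Code.evaln k c (Encodable.encode (tailF s))).isSome) := by
    have h1 : Primrec (fun p : List Bool × ℕ => decide (leadT p.1 < p.1.length)) :=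
      Primrec.nat_lt.comp (primrec_leadT.comp Primrec.fst)
        (Primrec.list_length.comp Primrec.fst) |>.decide
    have h2 : Primrec (fun p : List Bool × ℕ =>
        (Nat.Partrec.Code.evaln p.2 c (Encodable.encode (tailF p.1))).isSome) :=
      Primrec.option_isSome.comp <|
        Nat.Partrec.Code.primrec_evaln.comp <|
          (Primrec.snd.pair (Primrec.const c)).pair
            (Primrec.encode.comp (primrec_tailF.comp Primrec.fst))
    exact Primrec.to_comp ((h1.cond h2 (Primrec.const false)).of_eq fun p => by
      cases h : decide (leadT p.1 < p.1.length) <;> simp [h])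
  have A : Primrec (fun p : List Bool × ℕ => EB ((tailF p.1).length + 2 * leadT p.1)) :=
    primrec_EB.comp (hN.comp Primrec.fst)
  have B : Primrec (fun p : List Bool × ℕ =>
      outsOf c p.2 ((tailF p.1).length + 2 * leadT p.1)) :=
    (primrec_outsOf c).comp (Primrec.snd.pair (hN.comp Primrec.fst))
  have hg : Computable₂ (fun (s : List Bool) (t : ℕ) =>
      fresh (EB ((tailF s).length + 2 * leadT s))
        (outsOf c t ((tailF s).length + 2 * leadT s))) :=
    Primrec.to_comp (Primrec₂.comp (f := fresh) primrec_fresh A B)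
  exact (Partrec.rfind hB.partrec₂).map hg


theorem busyF_dom_guard {c : Nat.Partrec.Code} {s : List Bool} (h : (busyF c s).Dom) :
    leadT s < s.length ∧
      ∃ k, (Nat.Partrec.Code.evaln k c (Encodable.encode (tailF s))).isSome = true := by
  obtain ⟨x, hx⟩ := Part.dom_iff_mem.1 h
  rw [busyF, Part.mem_map_iff] at hx
  obtain ⟨t, ht, -⟩ := hx
  have := Nat.rfind_spec ht
  rw [Part.mem_some_iff] at this
  have := this.symm
  rw [Bool.and_eq_true] at this
  exact ⟨by simpa using this.1, t, this.2⟩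

theorem halts_of_evaln {c : Nat.Partrec.Code} {V : Computer} (hc : ComputesVia c V)
    {q : List Bool} {k v : ℕ} (h : Nat.Partrec.Code.evaln k c (Encodable.encode q) = some v) :
    (V.f q).Dom := by
  have h2 : v ∈ c.eval (Encodable.encode q) := Nat.Partrec.Code.evaln_sound h
  rw [hc q] at h2
  have hd : ((V.f q).map Encodable.encode).Dom := Part.dom_iff_mem.2 ⟨v, h2⟩
  exact hd

theorem runtime_halts {c : Nat.Partrec.Code} {V : Computer} (hc : ComputesVia c V)
    {q : List Bool} (hq : (V.f q).Dom) :
    (Nat.Partrec.Code.evaln (runtime c q) c (Encodable.encode q)).isSome = true := by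
  have hev : (c.eval (Encodable.encode q)).Dom := by rw [hc q]; exact hq
  obtain ⟨v, hv⟩ := Part.dom_iff_mem.1 hev
  obtain ⟨k, hk⟩ := Nat.Partrec.Code.evaln_complete.1 hv
  have hne : {k : ℕ | (Nat.Partrec.Code.evaln k c (Encodable.encode q)).isSome = true}.Nonempty :=
    ⟨k, by simp only [Set.mem_setOf_eq, Option.isSome_iff_exists]; exact ⟨v, hk⟩⟩
  exact Nat.sInf_mem hne

theorem runtime_min {c : Nat.Partrec.Code} {q : List Bool} {m : ℕ} (hm : m < runtime c q) :
    (Nat.Partrec.Code.evaln m c (Encodable.encode q)).isSome = false := by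
  have := Nat.notMem_of_lt_sInf hm
  simp only [Set.mem_setOf_eq] at this
  exact Bool.eq_false_iff.2 this

theorem busyF_eq {c : Nat.Partrec.Code} (V : Computer) (hc : ComputesVia c V) {s : List Bool}
    (hg : leadT s < s.length) (hp : (V.f (tailF s)).Dom) :
    busyF c s = Part.some (fresh (EB ((tailF s).length + 2 * leadT s))
      (outsOf c (runtime c (tailF s)) ((tailF s).length + 2 * leadT s))) := by
  apply Part.eq_some_iff.2
  rw [busyF]
  apply Part.mem_map
  refine Nat.mem_rfind.2 ?_
  constructor
  · rw [Part.mem_some_iff]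
    symm
    rw [Bool.and_eq_true]
    exact ⟨decide_eq_true hg, runtime_halts hc hp⟩
  · intro m hm
    rw [Part.mem_some_iff]
    have := runtime_min hm
    rw [this]
    simp


end BusyAux
theorem stmt_17 (V : Computer) (hV : V.IsOptimal)
    (c : Nat.Partrec.Code) (hc : ComputesVia c V) :
    ∃ d : ℕ, ∀ p : List Bool, (V.f p).Dom →
      ∃ q : List Bool, (V.f q).Dom ∧ q.length ≤ p.length + d ∧
        runtime c p < runtime c q := by
  classical
  have prefixFree : ∀ s s' : List Bool, (busyF c s).Dom → (busyF c s').Dom → s <+: s' →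
      s = s' := by
    intro s s' hs hs' hpre
    obtain ⟨hg1, k1, hk1⟩ := busyF_dom_guard hs
    obtain ⟨hg2, k2, hk2⟩ := busyF_dom_guard hs'
    have h1 := structure_of s hg1
    have h2 := structure_of s' hg2
    rw [h1, h2] at hpre
    obtain ⟨hD, hp⟩ := prefix_structure _ _ _ _ hpre
    obtain ⟨v1, hv1⟩ := Option.isSome_iff_exists.1 hk1
    obtain ⟨v2, hv2⟩ := Option.isSome_iff_exists.1 hk2
    have d1 : (V.f (tailF s)).Dom := halts_of_evaln hc hv1
    have d2 : (V.f (tailF s')).Dom := halts_of_evaln hc hv2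
    have heq := V.prefixFree _ _ d1 d2 hp
    rw [h1, h2, hD, heq]
  let C : Computer := ⟨busyF c, busyF_partrec c, prefixFree⟩
  obtain ⟨c0, hopt⟩ := hV C
  refine ⟨2 * c0 + 2, ?_⟩
  intro p hp
  by_contra hcon
  push_neg at hcon
  set s : List Bool := List.replicate (c0 + 1) true ++ false :: p with hs
  have hlead : leadT s = c0 + 1 := leadT_rep _ _
  have htail : tailF s = p := tailF_rep _ _
  have hslen : s.length = c0 + 1 + (p.length + 1) := by simp [hs]
  have hguard : leadT s < s.length := by rw [hlead, hslen]; omega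
  have hval : busyF c s = Part.some (fresh (EB (p.length + 2 * (c0 + 1)))
      (outsOf c (runtime c p) (p.length + 2 * (c0 + 1)))) := by
    have h := busyF_eq V hc hguard (by rw [htail]; exact hp)
    rw [htail, hlead] at h
    exact h
  have hDom : (C.f s).Dom := by
    show (busyF c s).Dom
    rw [hval]
    trivial
  obtain ⟨q, hq, hlen⟩ := hopt s hDom
  have hgets : (C.f s).get hDom = fresh (EB (p.length + 2 * (c0 + 1)))
      (outsOf c (runtime c p) (p.length + 2 * (c0 + 1))) := by
    apply Part.get_eq_of_mem
    show _ ∈ busyF c s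
    rw [hval]
    exact Part.mem_some _
  rw [hgets] at hq
  have hqdom : (V.f q).Dom := by rw [hq]; trivial
  have hqlen : q.length ≤ p.length + (2 * c0 + 2) := by
    rw [hslen] at hlen
    omega
  have hrt : runtime c q ≤ runtime c p := hcon q hqdom hqlen
  obtain ⟨v, hv⟩ := Option.isSome_iff_exists.1 (runtime_halts hc hqdom)
  have h2 : v ∈ Nat.Partrec.Code.evaln (runtime c p) c (Encodable.encode q) :=
    Nat.Partrec.Code.evaln_mono hrt hv
  have h3 : v ∈ c.eval (Encodable.encode q) := Nat.Partrec.Code.evaln_sound h2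
  rw [hc q, hq] at h3
  have h4 : v = Encodable.encode (fresh (EB (p.length + 2 * (c0 + 1)))
      (outsOf c (runtime c p) (p.length + 2 * (c0 + 1)))) := by
    rw [Part.mem_map_iff] at h3
    obtain ⟨a, ha, rfl⟩ := h3
    rw [Part.mem_some_iff] at ha
    rw [ha]
  have h5 : fresh (EB (p.length + 2 * (c0 + 1)))
      (outsOf c (runtime c p) (p.length + 2 * (c0 + 1)))
      ∈ outsOf c (runtime c p) (p.length + 2 * (c0 + 1)) := by
    apply mem_outsOf (by omega : q.length ≤ p.length + 2 * (c0 + 1))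
    rw [← h4]
    exact h2
  exact absurd h5 (fresh_spec (lt_of_le_of_lt (length_outsOf _ _ _) Nat.lt_two_pow_self))
end

section
/- For every total recursive function f : ℕ⁺ → ℕ that is unbounded, H(n) ≤ f(n) holds for infinitely many n ∈ ℕ⁺. -/
open scoped Classical ENNReal

section Aux

private lemma bits_eq_map (n : ℕ) : n.bits = (List.range n.size).map n.testBit := by
  induction n using Nat.strong_induction_on with
  | _ n ih =>
    rcases Nat.eq_zero_or_pos n with h0 | hpos
    · subst h0; simp
    · have hne : n.bits ≠ [] := by
        intro h
        have hlen := Nat.size_eq_bits_len n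
        rw [h] at hlen; simp at hlen
        have : n < 2 ^ 0 := Nat.size_le.mp (by omega)
        simp at this; omega
      have hb : n.bits = n.bodd :: n.div2.bits := by
        obtain ⟨a, t, hat⟩ := List.exists_cons_of_ne_nil hne
        have h1 := Nat.bodd_eq_bits_head n
        have h2 := Nat.div2_bits_eq_tail n
        rw [hat] at h1 h2 ⊢; simp at h1 h2; rw [h1, h2]
      have hsize : n.size = n.div2.size + 1 := by
        have h1 := Nat.size_eq_bits_len n
        have h2 := Nat.size_eq_bits_len n.div2
        rw [hb] at h1; simp at h1; omega
      have hlt : n.div2 < n := by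
        rw [Nat.div2_val]; exact Nat.div_lt_self hpos (by norm_num)
      rw [hb, ih _ hlt, hsize, List.range_succ_eq_map, List.map_cons, List.map_map]
      congr 1
      · apply List.map_congr_left
        intro i _
        simp only [Function.comp_apply, Nat.succ_eq_add_one]
        rw [show i + 1 = (i : ℕ).succ from rfl, Nat.testBit_succ, Nat.div2_val]

end Aux

private lemma natToStr_eq' (n : ℕ) :
    natToStr n = (((List.range ((n+1).size)).map (n+1).testBit).reverse).tail := by
  unfold natToStr
  rw [← bits_eq_map]
  induction (n+1).bits using List.reverseRecOn with
  | nil => simp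
  | append_singleton l a ih => simp

private lemma primrec_pow_s18 : Primrec₂ ((· ^ ·) : ℕ → ℕ → ℕ) :=
  Primrec₂.unpaired'.mp Nat.Primrec.pow

private lemma primrec_size : Primrec Nat.size := by
  have h : Primrec fun n => (List.range (n+1)).findIdx (fun k => decide (n < 2 ^ k)) := by
    apply Primrec.list_findIdx (Primrec.list_range.comp (Primrec.succ))
    exact (Primrec.nat_lt.comp Primrec.fst (primrec_pow_s18.comp (Primrec.const 2) Primrec.snd)).decide
  apply h.of_eq
  intro n
  have hlt : n.size < (List.range (n+1)).length := by
    simp; have := Nat.lt_two_pow_self (n := n); have := Nat.size_le (m := n) (n := n); omega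
  rw [List.findIdx_eq hlt]
  constructor
  · simp [Nat.lt_size_self n]
  · intro j hj
    simp only [List.getElem_range, decide_eq_false_iff_not, not_lt]
    by_contra h'
    simp at h'
    exact absurd (Nat.size_le.mpr h') (by omega)

private lemma primrec_testBit : Primrec₂ Nat.testBit := by
  have : Primrec₂ fun n i => decide (n / 2 ^ i % 2 = 1) :=
    Primrec.eq.comp
      (Primrec.nat_mod.comp
        (Primrec.nat_div.comp Primrec.fst (primrec_pow_s18.comp (Primrec.const 2) Primrec.snd))
        (Primrec.const 2))
      (Primrec.const 1) |>.decide
  exact this.of_eq fun n i => (Nat.testBit_eq_decide_div_mod_eq).symm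

private lemma primrec_natToStr : Primrec natToStr := by
  have h : Primrec fun n =>
      (((List.range ((n+1).size)).map (n+1).testBit).reverse).tail := by
    apply Primrec.list_tail.comp
    apply Primrec.list_reverse.comp
    apply Primrec.list_map (Primrec.list_range.comp (primrec_size.comp Primrec.succ))
    exact primrec_testBit.comp (Primrec.succ.comp Primrec.fst) Primrec.snd
  exact h.of_eq fun n => (natToStr_eq' n).symm

private lemma primrec_repOne : Primrec fun k => List.replicate k false ++ [true] := by
  have h1 : Primrec fun k => (List.replicate k false : List Bool) := by
    have := Primrec.nat_rec₁ ([] : List Bool)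
      (f := fun _ l => false :: l)
      (Primrec.list_cons.comp (Primrec.const false) Primrec.snd)
    apply this.of_eq
    intro k; induction k with
    | zero => rfl
    | succ k ih => simpa [List.replicate_succ] using ih
  exact Primrec.list_concat.comp h1 (Primrec.const true)

def CpredB (f : ℕ → ℕ) (p : List Bool) (m : ℕ) : Bool :=
  decide (p = List.replicate (p.length - 1) false ++ [true]) && decide (2 ^ (p.length - 1) < f (m + 1))

def CfB (f : ℕ → ℕ) : List Bool →. List Bool := fun p =>
  (Nat.rfind (fun m => Part.some (CpredB f p m))).map (fun m => natToStr (m + 1))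

private lemma computable_CpredB {f : ℕ → ℕ} (hf : Computable f) : Computable₂ (CpredB f) := by
  have hlen : Primrec fun p : List Bool => p.length - 1 :=
    Primrec.pred.comp Primrec.list_length
  have c1 : Primrec fun p : List Bool =>
      decide (p = List.replicate (p.length - 1) false ++ [true]) :=
    (Primrec.eq.comp Primrec.id (primrec_repOne.comp hlen)).decide
  have c2 : Computable fun q : List Bool × ℕ =>
      decide (2 ^ (q.1.length - 1) < f (q.2 + 1)) := by
    have ha : Computable fun q : List Bool × ℕ => 2 ^ (q.1.length - 1) :=
      (primrec_pow_s18.comp (Primrec.const 2) (hlen.comp Primrec.fst)).to_comp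
    have hb : Computable fun q : List Bool × ℕ => f (q.2 + 1) :=
      hf.comp (Primrec.succ.comp Primrec.snd).to_comp
    exact (Primrec.nat_lt.decide.to_comp.comp ha hb)
  have := Computable.cond (c1.to_comp.comp Computable.fst) c2
    (Computable.const false)
  apply this.of_eq
  rintro ⟨p, m⟩
  simp only [CpredB]
  cases h : decide (p = List.replicate (p.length - 1) false ++ [true]) <;> simp [h]

private lemma partrec_CfB {f : ℕ → ℕ} (hf : Computable f) : Partrec (CfB f) := by
  have h1 : Partrec₂ fun (p : List Bool) (m : ℕ) => (Part.some (CpredB f p m) : Part Bool) :=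
    (computable_CpredB hf).partrec₂
  have h2 := Partrec.rfind h1
  exact h2.map ((primrec_natToStr.to_comp.comp
    (Primrec.succ.to_comp.comp Computable.snd)).to₂)

private lemma CfB_dom {f : ℕ → ℕ} {p : List Bool} :
    (CfB f p).Dom ↔ ∃ m, CpredB f p m = true := by
  have hh : (CfB f p).Dom ↔ (Nat.rfind (fun m => Part.some (CpredB f p m))).Dom := Iff.rfl
  rw [hh]; refine Nat.rfind_dom.trans ?_
  constructor
  · rintro ⟨n, ⟨_, hn⟩, _⟩; exact ⟨n, hn⟩
  · rintro ⟨m, hm⟩; exact ⟨m, ⟨trivial, hm⟩, fun _ => trivial⟩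

private lemma CfB_shape {f : ℕ → ℕ} {p : List Bool} (h : (CfB f p).Dom) :
    p = List.replicate (p.length - 1) false ++ [true] := by
  obtain ⟨m, hm⟩ := CfB_dom.mp h
  simp [CpredB] at hm
  exact hm.1

private lemma shape_prefixFree' {j k : ℕ} {p q : List Bool}
    (hp : p = List.replicate j false ++ [true])
    (hq : q = List.replicate k false ++ [true])
    (hpr : p <+: q) : p = q := by
  subst hp; subst hq
  have hjk : j ≤ k := by
    have := hpr.length_le
    simpa using this
  rcases eq_or_lt_of_le hjk with h | h
  · rw [h]
  · exfalso
    have hj : j < (List.replicate j false ++ [true]).length := by simp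
    have e := hpr.getElem hj
    rw [List.getElem_concat_length (by simp) _] at e
    rw [List.getElem_append_left (by simpa using h)] at e
    simp at e

private lemma shape_prefixFree {p q : List Bool}
    (hp : p = List.replicate (p.length - 1) false ++ [true])
    (hq : q = List.replicate (q.length - 1) false ++ [true])
    (hpr : p <+: q) : p = q :=
  shape_prefixFree' hp hq hpr

private lemma CfB_eval (f : ℕ → ℕ) (k : ℕ) (hE : ∃ m, 2 ^ k < f (m + 1)) :
    CfB f (List.replicate k false ++ [true]) = Part.some (natToStr (Nat.find hE + 1)) := by
  set p := List.replicate k false ++ [true] with hpdef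
  have hplen : p.length - 1 = k := by simp [hpdef]
  have hpred : ∀ m, CpredB f p m = decide (2 ^ k < f (m + 1)) := by
    intro m
    simp only [CpredB, hplen]
    simp [← hpdef]
  have hm : (Nat.find hE) ∈ Nat.rfind (fun m => Part.some (CpredB f p m)) := by
    refine Nat.mem_rfind.mpr ?_
    constructor
    · simpa [hpred] using Nat.find_spec hE
    · intro m hmlt
      simpa [hpred] using Nat.find_min hE hmlt
  exact Part.eq_some_iff.mpr (Part.mem_map _ hm)

private def machineC (f : ℕ → ℕ) (hf : Computable f) : Computer where
  f := CfB f
  partrec := partrec_CfB hf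
  prefixFree := fun _ _ hp hq hpr => shape_prefixFree (CfB_shape hp) (CfB_shape hq) hpr


theorem stmt_18 (U : Computer) (hU : U.IsOptimal) (f : ℕ → ℕ) (hf : Computable f)
    (hub : ∀ B : ℕ, ∃ n : ℕ, 1 ≤ n ∧ B < f n) :
    ∀ N : ℕ, ∃ n : ℕ, N ≤ n ∧ 1 ≤ n ∧ HN U n ≤ (f n : ℕ∞) := by
  intro N
  obtain ⟨d, hd⟩ := hU (machineC f hf)
  set F := (Finset.range N).sup f with hFdef
  set k := F + d + 1 with hkdef
  have hE : ∃ m, 2 ^ k < f (m + 1) := by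
    obtain ⟨n, h1, h2⟩ := hub (2 ^ k)
    exact ⟨n - 1, by rwa [Nat.sub_add_cancel h1]⟩
  set n₀ := Nat.find hE + 1 with hn₀def
  set pk := List.replicate k false ++ [true] with hpkdef
  have hval : CfB f pk = Part.some (natToStr n₀) := CfB_eval f k hE
  have hdom : (CfB f pk).Dom := by rw [hval]; trivial
  obtain ⟨q, hq, hqlen⟩ := hd pk hdom
  have hget : (CfB f pk).get hdom = natToStr n₀ := by simp [hval]
  have hUq : U.f q = Part.some (natToStr n₀) := by
    rw [hq]
    exact congrArg Part.some hget
  have hH : HN U n₀ ≤ (q.length : ℕ∞) := sInf_le ⟨q, hUq, rfl⟩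
  have hspec : 2 ^ k < f n₀ := Nat.find_spec hE
  have hk2 : k + d ≤ 2 ^ k := by
    have h1 : k - 1 < 2 ^ (k - 1) := Nat.lt_two_pow_self (n := k - 1)
    have h2 : 2 ^ (k - 1) * 2 = 2 ^ k := by
      rw [← pow_succ, Nat.sub_add_cancel (by omega)]
    omega
  have hpklen : pk.length = k + 1 := by rw [hpkdef]; simp
  have hlen2 : q.length ≤ f n₀ := by
    rw [hpklen] at hqlen
    omega
  refine ⟨n₀, ?_, by omega, ?_⟩
  · by_contra hcon
    push_neg at hcon
    have hFle : f n₀ ≤ F := Finset.le_sup (Finset.mem_range.mpr hcon)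
    have := Nat.lt_two_pow_self (n := k)
    omega
  · exact le_trans hH (by exact_mod_cast hlen2)
end
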